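/- For any finite network (a finite vertex type V, a symmetric nonnegative capacity function c : V → V → ℝ, and n pairwise distinct boundary vertices b 1, …, b n) there exists a max multiflow: a family of antisymmetric functions f i j : V → V → ℝ (for i < j, extended by f j i = − f i j) with ∑_y f i j x y = 0 at every vertex x ∉ {b i, b j} and ∑_{i<j} |f i j x y| ≤ c x y for all x, y, such that for every index i the net flux ∑_{j ≠ i} ∑_{y} f i j (b i) y out of b i equals the single-party min-cut value S({i}) = min { ∑_{x ∈ W, y ∉ W} c x y : W ⊆ V, W ∩ {b 1,…,b n} = {b i} }. -/

import Mathlib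

open Finset

set_option linter.unusedSectionVars false

namespace MaxMF

variable {V : Type*} [Fintype V] [DecidableEq V]

noncomputable def stepCnt (g : ℕ → V) (m : ℕ) (x y : V) : ℝ :=
  ∑ r ∈ range m, if g r = x ∧ g (r+1) = y then 1 else 0

noncomputable def usg (g : ℕ → V) (m : ℕ) (x y : V) : ℝ :=
  if x = y then 0 else stepCnt g m x y + stepCnt g m y x

noncomputable def flo (g : ℕ → V) (m : ℕ) (x y : V) : ℝ :=
  stepCnt g m x y - stepCnt g m y x

noncomputable def len (ℓ : V → V → ℝ) (g : ℕ → V) (m : ℕ) : ℝ :=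
  ∑ r ∈ range m, ℓ (g r) (g (r+1))

lemma stepCnt_nonneg (g : ℕ → V) (m : ℕ) (x y : V) : 0 ≤ stepCnt g m x y := by
  apply Finset.sum_nonneg; intro r _; positivity

lemma usg_nonneg (g : ℕ → V) (m : ℕ) (x y : V) : 0 ≤ usg g m x y := by
  unfold usg; split
  · exact le_refl _
  · exact add_nonneg (stepCnt_nonneg _ _ _ _) (stepCnt_nonneg _ _ _ _)

lemma usg_symm (g : ℕ → V) (m : ℕ) (x y : V) : usg g m x y = usg g m y x := by
  unfold usg
  rcases eq_or_ne x y with h | h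
  · simp [h]
  · rw [if_neg h, if_neg (Ne.symm h), add_comm]

lemma flo_antisymm (g : ℕ → V) (m : ℕ) (x y : V) : flo g m x y = - flo g m y x := by
  unfold flo; ring

lemma flo_diag (g : ℕ → V) (m : ℕ) (x : V) : flo g m x x = 0 := by
  unfold flo; ring

lemma abs_flo_le_usg (g : ℕ → V) (m : ℕ) (x y : V) :
    |flo g m x y| ≤ usg g m x y := by
  rcases eq_or_ne x y with h | h
  · subst h; rw [flo_diag]; simpa using usg_nonneg g m x x
  unfold flo usg
  rw [if_neg h]
  have h1 := stepCnt_nonneg g m x y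
  have h2 := stepCnt_nonneg g m y x
  rw [abs_le]; constructor <;> linarith

lemma sum_ite_step (g : ℕ → V) (r : ℕ) (x : V) :
    ∑ y, (if g r = x ∧ g (r+1) = y then (1:ℝ) else 0) = if g r = x then 1 else 0 := by
  rcases eq_or_ne (g r) x with h | h
  · simp [h]
  · simp [h]

lemma sum_flo (g : ℕ → V) (m : ℕ) (x : V) :
    ∑ y, flo g m x y
      = (if g 0 = x then (1:ℝ) else 0) - (if g m = x then 1 else 0) := by
  unfold flo stepCnt
  rw [Finset.sum_sub_distrib]
  have h1 : ∑ y, ∑ r ∈ range m, (if g r = x ∧ g (r+1) = y then (1:ℝ) else 0)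
      = ∑ r ∈ range m, (if g r = x then (1:ℝ) else 0) := by
    rw [Finset.sum_comm]
    exact Finset.sum_congr rfl fun r _ => sum_ite_step g r x
  have h2 : ∑ y, ∑ r ∈ range m, (if g r = y ∧ g (r+1) = x then (1:ℝ) else 0)
      = ∑ r ∈ range m, (if g (r+1) = x then (1:ℝ) else 0) := by
    rw [Finset.sum_comm]
    refine Finset.sum_congr rfl fun r _ => ?_
    rcases eq_or_ne (g (r+1)) x with h | h
    · simp [h]
    · rw [Finset.sum_eq_zero, if_neg h]
      intro y _
      rw [if_neg]; rintro ⟨-, hx⟩; exact h hx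
  rw [h1, h2, ← Finset.sum_sub_distrib]
  exact Finset.sum_range_sub' (fun r => if g r = x then (1:ℝ) else 0) m

/-- any walk from inside `W` to outside `W` has crossing usage at least 1. -/
lemma one_le_cross_usage (g : ℕ → V) (m : ℕ) (W : Finset V)
    (h0 : g 0 ∈ W) (hm : g m ∉ W) :
    (1:ℝ) ≤ ∑ x ∈ W, ∑ y ∈ Wᶜ, usg g m x y := by
  have key : ∑ x ∈ W, ∑ y ∈ Wᶜ, stepCnt g m x y
      = ∑ r ∈ range m, (if g r ∈ W ∧ g (r+1) ∉ W then (1:ℝ) else 0) := by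
    unfold stepCnt
    have swap : ∀ x : V, ∑ y ∈ Wᶜ, ∑ r ∈ range m, (if g r = x ∧ g (r+1) = y then (1:ℝ) else 0)
        = ∑ r ∈ range m, ∑ y ∈ Wᶜ, (if g r = x ∧ g (r+1) = y then (1:ℝ) else 0) :=
      fun x => Finset.sum_comm
    calc ∑ x ∈ W, ∑ y ∈ Wᶜ, ∑ r ∈ range m, (if g r = x ∧ g (r+1) = y then (1:ℝ) else 0)
        = ∑ x ∈ W, ∑ r ∈ range m, ∑ y ∈ Wᶜ, (if g r = x ∧ g (r+1) = y then (1:ℝ) else 0) :=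
          Finset.sum_congr rfl fun x _ => swap x
      _ = ∑ r ∈ range m, ∑ x ∈ W, ∑ y ∈ Wᶜ, (if g r = x ∧ g (r+1) = y then (1:ℝ) else 0) :=
          Finset.sum_comm
      _ = ∑ r ∈ range m, (if g r ∈ W ∧ g (r+1) ∉ W then (1:ℝ) else 0) := by
          refine Finset.sum_congr rfl fun r _ => ?_
          by_cases hr : g r ∈ W
          · by_cases hr1 : g (r+1) ∈ W
            · rw [if_neg (by tauto)]
              apply Finset.sum_eq_zero; intro x _
              apply Finset.sum_eq_zero; intro y hy
              rw [if_neg]; rintro ⟨-, h2⟩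
              exact (Finset.mem_compl.1 hy) (h2 ▸ hr1)
            · rw [if_pos ⟨hr, hr1⟩]
              rw [Finset.sum_eq_single (g r), Finset.sum_eq_single (g (r+1))]
              · simp
              · intro y _ hy; rw [if_neg]; rintro ⟨-, h2⟩; exact hy h2.symm
              · intro h; exact absurd (Finset.mem_compl.2 hr1) h
              · intro x _ hx
                apply Finset.sum_eq_zero; intro y _
                rw [if_neg]; rintro ⟨h2, -⟩; exact hx h2.symm
              · intro h; exact absurd hr h
          · rw [if_neg (by tauto)]
            apply Finset.sum_eq_zero; intro x hx
            apply Finset.sum_eq_zero; intro y _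
            rw [if_neg]; rintro ⟨h2, -⟩; exact hr (h2 ▸ hx)
  have mono : ∑ r ∈ range m, (if g r ∈ W ∧ g (r+1) ∉ W then (1:ℝ) else 0)
      ≥ ∑ r ∈ range m, ((if g r ∈ W then (1:ℝ) else 0) - (if g (r+1) ∈ W then 1 else 0)) := by
    apply Finset.sum_le_sum
    intro r _
    by_cases hr : g r ∈ W <;> by_cases hr1 : g (r+1) ∈ W <;> simp [hr, hr1]
  have tel : ∑ r ∈ range m, ((if g r ∈ W then (1:ℝ) else 0) - (if g (r+1) ∈ W then 1 else 0))
      = 1 := by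
    rw [Finset.sum_range_sub' (fun r => if g r ∈ W then (1:ℝ) else 0) m]
    simp [h0, hm]
  have le1 : (1:ℝ) ≤ ∑ x ∈ W, ∑ y ∈ Wᶜ, stepCnt g m x y := by
    rw [tel] at mono
    rw [key]; exact mono
  refine le_trans le1 (Finset.sum_le_sum fun x hx => Finset.sum_le_sum fun y hy => ?_)
  have hxy : x ≠ y := fun h => (Finset.mem_compl.1 hy) (h ▸ hx)
  unfold usg
  rw [if_neg hxy]
  have := stepCnt_nonneg g m y x
  linarith

lemma len_nonneg {ℓ : V → V → ℝ} (hnn : ∀ x y, 0 ≤ ℓ x y) (g : ℕ → V) (m : ℕ) :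
    0 ≤ len ℓ g m :=
  Finset.sum_nonneg fun r _ => hnn _ _

lemma len_congr {ℓ : V → V → ℝ} {g g' : ℕ → V} {m : ℕ} (h : ∀ r ≤ m, g r = g' r) :
    len ℓ g m = len ℓ g' m := by
  refine Finset.sum_congr rfl fun r hr => ?_
  have := Finset.mem_range.1 hr
  rw [h r (by omega), h (r+1) (by omega)]

def extW (g : ℕ → V) (m : ℕ) (v : V) : ℕ → V := fun r => if r ≤ m then g r else v

lemma extW_zero (g : ℕ → V) (m : ℕ) (v : V) : extW g m v 0 = g 0 := by simp [extW]

lemma extW_eq (g : ℕ → V) (m : ℕ) (v : V) {r : ℕ} (h : r ≤ m) : extW g m v r = g r := by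
  simp [extW, h]

lemma extW_app (g : ℕ → V) (m : ℕ) (v : V) : extW g m v (m+1) = v := by
  simp [extW]

lemma len_extW_app (ℓ : V → V → ℝ) (g : ℕ → V) (m : ℕ) (v : V) :
    len ℓ (extW g m v) (m+1) = len ℓ g m + ℓ (g m) v := by
  unfold len
  rw [Finset.sum_range_succ]
  congr 1
  · refine Finset.sum_congr rfl fun r hr => ?_
    have hr' := Finset.mem_range.1 hr
    rw [extW_eq g m v (by omega), extW_eq g m v (by omega)]
  · rw [extW_eq g m v (le_refl m), extW_app]

lemma extW_end (g : ℕ → V) {m M : ℕ} (h : m ≤ M) : extW g m (g m) M = g m := by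
  rcases eq_or_lt_of_le h with h' | h'
  · rw [extW_eq g m _ (le_of_eq h'.symm), h']
  · simp [extW, Nat.not_le.2 h']

lemma len_extW_pad (ℓ : V → V → ℝ) (hdiag : ∀ x, ℓ x x = 0) (g : ℕ → V) {m M : ℕ}
    (h : m ≤ M) : len ℓ (extW g m (g m)) M = len ℓ g m := by
  unfold len
  rw [Finset.range_eq_Ico, Finset.range_eq_Ico, ← Finset.sum_Ico_consecutive _ (Nat.zero_le m) h]
  have h1 : ∑ r ∈ Finset.Ico 0 m, ℓ (extW g m (g m) r) (extW g m (g m) (r+1))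
      = ∑ r ∈ Finset.Ico 0 m, ℓ (g r) (g (r+1)) := by
    refine Finset.sum_congr rfl fun r hr => ?_
    have hr' := (Finset.mem_Ico.1 hr).2
    rw [extW_eq g m _ (by omega), extW_eq g m _ (by omega)]
  have h2 : ∑ r ∈ Finset.Ico m M, ℓ (extW g m (g m) r) (extW g m (g m) (r+1)) = 0 := by
    apply Finset.sum_eq_zero
    intro r hr
    have hr' := (Finset.mem_Ico.1 hr).1
    have e1 : extW g m (g m) r = g m := extW_end g hr'
    have e2 : extW g m (g m) (r+1) = g m := extW_end g (by omega)
    rw [e1, e2, hdiag]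
  rw [h1, h2, add_zero]

def cutW (g : ℕ → V) (r d : ℕ) : ℕ → V := fun x => if x ≤ r then g x else g (x + d)

lemma len_cutW (ℓ : V → V → ℝ) (hnn : ∀ x y, 0 ≤ ℓ x y) (g : ℕ → V) {m r r' : ℕ}
    (h1 : r < r') (h2 : r' ≤ m) (h3 : g r = g r') :
    cutW g r (r' - r) 0 = g 0 ∧ cutW g r (r' - r) (m - (r' - r)) = g m ∧
    len ℓ (cutW g r (r' - r)) (m - (r' - r)) ≤ len ℓ g m := by
  set d := r' - r with hd
  have hdpos : 0 < d := by omega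
  have hrd : r + d = r' := by omega
  have hrm : r ≤ m - d := by omega
  refine ⟨by simp [cutW], ?_, ?_⟩
  · show (if m - d ≤ r then g (m-d) else g (m - d + d)) = g m
    rcases eq_or_lt_of_le hrm with h' | h'
    · rw [if_pos (le_of_eq h'.symm), ← h', h3]
      congr 1
      omega
    · rw [if_neg (Nat.not_le.2 h')]
      congr 1
      omega
  · unfold len
    have key : ∀ x ∈ Finset.Ico r (m - d), ℓ (cutW g r d x) (cutW g r d (x+1))
        = ℓ (g (x + d)) (g (x + d + 1)) := by
      intro x hx
      have hx' := Finset.mem_Ico.1 hx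
      have e2 : cutW g r d (x+1) = g (x + d + 1) := by
        show (if x + 1 ≤ r then g (x+1) else g (x + 1 + d)) = g (x + d + 1)
        rw [if_neg (by omega)]
        congr 1
        omega
      have e1 : cutW g r d x = g (x + d) := by
        show (if x ≤ r then g x else g (x + d)) = g (x + d)
        rcases eq_or_lt_of_le hx'.1 with h' | h'
        · rw [if_pos (le_of_eq h'.symm), ← h', h3, hrd]
        · rw [if_neg (by omega)]
      rw [e1, e2]
    rw [Finset.range_eq_Ico, Finset.range_eq_Ico, ← Finset.sum_Ico_consecutive _ (Nat.zero_le r) hrm]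
    rw [← Finset.sum_Ico_consecutive (fun x => ℓ (g x) (g (x+1))) (Nat.zero_le r) (show r ≤ m by omega)]
    have hA : ∑ x ∈ Finset.Ico 0 r, ℓ (cutW g r d x) (cutW g r d (x+1))
        = ∑ x ∈ Finset.Ico 0 r, ℓ (g x) (g (x+1)) := by
      refine Finset.sum_congr rfl fun x hx => ?_
      have hx' := (Finset.mem_Ico.1 hx).2
      show ℓ (if x ≤ r then g x else g (x+d)) (if x + 1 ≤ r then g (x+1) else g (x+1+d))
          = ℓ (g x) (g (x+1))
      rw [if_pos (by omega), if_pos (by omega)]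
    rw [hA]
    apply add_le_add_right
    rw [Finset.sum_congr rfl key]
    have hB : ∑ x ∈ Finset.Ico r (m - d), ℓ (g (x + d)) (g (x + d + 1))
        = ∑ x ∈ Finset.Ico (r + d) m, ℓ (g x) (g (x+1)) := by
      rw [Finset.sum_Ico_eq_sum_range, Finset.sum_Ico_eq_sum_range]
      have hmm : m - d - r = m - (r + d) := by omega
      rw [hmm]
      refine Finset.sum_congr rfl fun k _ => ?_
      have e1 : r + k + d = r + d + k := by omega
      rw [e1]
    rw [hB, ← Finset.sum_Ico_consecutive (fun x => ℓ (g x) (g (x+1))) (show r ≤ r + d by omega) (show r + d ≤ m by omega)]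
    have hpos : 0 ≤ ∑ x ∈ Finset.Ico r (r + d), ℓ (g x) (g (x+1)) :=
      Finset.sum_nonneg fun x _ => hnn _ _
    linarith

lemma normalizeW (ℓ : V → V → ℝ) (hnn : ∀ x y, 0 ≤ ℓ x y) (hdiag : ∀ x, ℓ x x = 0)
    {M : ℕ} (hM : Fintype.card V ≤ M) :
    ∀ m, ∀ g : ℕ → V, ∃ g' : ℕ → V, g' 0 = g 0 ∧ g' M = g m ∧
      len ℓ g' M ≤ len ℓ g m := by
  intro m
  induction m using Nat.strong_induction_on with
  | _ m ih =>
    intro g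
    by_cases hm : m ≤ M
    · exact ⟨extW g m (g m), extW_zero g m _, extW_end g hm,
        le_of_eq (len_extW_pad ℓ hdiag g hm)⟩
    · push_neg at hm
      have hcard : Fintype.card V < Fintype.card (Fin (m+1)) := by
        rw [Fintype.card_fin]; omega
      obtain ⟨a, a', hne, heq⟩ := Fintype.exists_ne_map_eq_of_card_lt
        (fun i : Fin (m+1) => g i.val) hcard
      have hvne : a.val ≠ a'.val := fun h => hne (Fin.ext h)
      rcases Nat.lt_or_ge a.val a'.val with hlt | hge
      · obtain ⟨z0, zm, zlen⟩ := len_cutW ℓ hnn g hlt (by omega : a'.val ≤ m) heq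
        obtain ⟨g', h0, hM', hl⟩ := ih (m - (a'.val - a.val)) (by omega) (cutW g a.val (a'.val - a.val))
        exact ⟨g', h0.trans z0, hM'.trans zm, hl.trans zlen⟩
      · have hlt : a'.val < a.val := by omega
        obtain ⟨z0, zm, zlen⟩ := len_cutW ℓ hnn g hlt (by omega : a.val ≤ m) heq.symm
        obtain ⟨g', h0, hM', hl⟩ := ih (m - (a.val - a'.val)) (by omega) (cutW g a'.val (a.val - a'.val))
        exact ⟨g', h0.trans z0, hM'.trans zm, hl.trans zlen⟩

/-- cut value of a vertex set. -/
noncomputable def cutval (c : V → V → ℝ) (W : Finset V) : ℝ := ∑ x ∈ W, ∑ y ∈ Wᶜ, c x y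

section dist

variable (ℓ : V → V → ℝ)

/-- shortest walk distance. -/
noncomputable def dW (a v : V) : ℝ :=
  sInf {x : ℝ | ∃ m : ℕ, ∃ g : ℕ → V, g 0 = a ∧ g m = v ∧ x = len ℓ g m}

variable {ℓ}
variable (hnn : ∀ x y, 0 ≤ ℓ x y) (hsym : ∀ x y, ℓ x y = ℓ y x) (hdiag : ∀ x, ℓ x x = 0)

lemma dW_set_nonempty (a v : V) :
    {x : ℝ | ∃ m : ℕ, ∃ g : ℕ → V, g 0 = a ∧ g m = v ∧ x = len ℓ g m}.Nonempty := by
  refine ⟨len ℓ (fun r => if r = 0 then a else v) 1, 1, fun r => if r = 0 then a else v, ?_, ?_, rfl⟩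
  · simp
  · simp

include hnn in
lemma dW_set_bdd (a v : V) :
    BddBelow {x : ℝ | ∃ m : ℕ, ∃ g : ℕ → V, g 0 = a ∧ g m = v ∧ x = len ℓ g m} := by
  refine ⟨0, fun x hx => ?_⟩
  obtain ⟨m, g, -, -, rfl⟩ := hx
  exact len_nonneg hnn g m

include hnn in
lemma dW_nonneg (a v : V) : 0 ≤ dW ℓ a v := by
  apply Real.sInf_nonneg
  rintro x ⟨m, g, -, -, rfl⟩
  exact len_nonneg hnn g m

include hnn in
lemma dW_self (a : V) : dW ℓ a a = 0 := by
  refine le_antisymm ?_ (dW_nonneg hnn a a)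
  apply csInf_le (dW_set_bdd hnn a a)
  exact ⟨0, fun _ => a, rfl, rfl, by simp [len]⟩

include hnn in
lemma dW_triangle (a u v : V) : dW ℓ a v ≤ dW ℓ a u + ℓ u v := by
  have key : ∀ x ∈ {x : ℝ | ∃ m : ℕ, ∃ g : ℕ → V, g 0 = a ∧ g m = v ∧ x = len ℓ g m},
      dW ℓ a v ≤ x := by
    rintro x ⟨m, g, h0, hm, rfl⟩
    exact csInf_le (dW_set_bdd hnn a v) ⟨m, g, h0, hm, rfl⟩
  have key2 : ∀ x ∈ {x : ℝ | ∃ m : ℕ, ∃ g : ℕ → V, g 0 = a ∧ g m = u ∧ x = len ℓ g m},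
      dW ℓ a v - ℓ u v ≤ x := by
    rintro x ⟨m, g, h0, hm, rfl⟩
    have mem : (len ℓ g m + ℓ u v) ∈ {x : ℝ | ∃ m : ℕ, ∃ g : ℕ → V, g 0 = a ∧ g m = v ∧ x = len ℓ g m} := by
      refine ⟨m+1, extW g m v, ?_, extW_app g m v, ?_⟩
      · rw [extW_zero g m v, h0]
      · rw [len_extW_app ℓ g m v, hm]
    have h2 : dW ℓ a v ≤ len ℓ g m + ℓ u v := key _ mem
    linarith
  have h3 : dW ℓ a v - ℓ u v ≤ dW ℓ a u := le_csInf (dW_set_nonempty a u) key2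
  linarith

include hnn hsym hdiag in
lemma dW_sep {n : ℕ} (b : Fin n → V)
    (HC : ∀ (i j : Fin n) (g : ℕ → V), i ≠ j → g 0 = b i →
      g (Fintype.card V) = b j → 1 ≤ len ℓ g (Fintype.card V))
    {i j : Fin n} (hij : i ≠ j) (u : V) :
    1 ≤ dW ℓ (b i) u + dW ℓ (b j) u := by
  by_contra hcon
  push_neg at hcon
  set ε : ℝ := (1 - (dW ℓ (b i) u + dW ℓ (b j) u)) / 2 with hε
  have hεpos : 0 < ε := by rw [hε]; linarith
  obtain ⟨x1, hx1mem, hx1⟩ := exists_lt_of_csInf_lt (dW_set_nonempty (ℓ := ℓ) (b i) u)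
    (show dW ℓ (b i) u < dW ℓ (b i) u + ε by linarith)
  obtain ⟨x2, hx2mem, hx2⟩ := exists_lt_of_csInf_lt (dW_set_nonempty (ℓ := ℓ) (b j) u)
    (show dW ℓ (b j) u < dW ℓ (b j) u + ε by linarith)
  obtain ⟨m1, g1, hg10, hg1m, rfl⟩ := hx1mem
  obtain ⟨m2, g2, hg20, hg2m, rfl⟩ := hx2mem
  -- reverse g2
  have hrev : len ℓ (fun r => g2 (m2 - r)) m2 = len ℓ g2 m2 := by
    unfold len
    rw [← Finset.sum_range_reflect]
    refine Finset.sum_congr rfl fun r hr => ?_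
    have hr' := Finset.mem_range.1 hr
    have e1 : m2 - (m2 - 1 - r) = r + 1 := by omega
    have e2 : m2 - (m2 - 1 - r + 1) = r := by omega
    simp only []
    rw [e1, e2, hsym]
  set g2r : ℕ → V := fun r => g2 (m2 - r) with hg2r
  have hg2r0 : g2r 0 = u := by rw [hg2r]; simpa using hg2m
  have hg2rm : g2r m2 = b j := by rw [hg2r]; simpa using hg20
  -- concatenate
  set gc : ℕ → V := fun r => if r ≤ m1 then g1 r else g2r (r - m1) with hgc
  have hgcle : ∀ r, r ≤ m1 → gc r = g1 r := by
    intro r hr; rw [hgc]; simp only []; rw [if_pos hr]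
  have hgcgt : ∀ r, m1 < r → gc r = g2r (r - m1) := by
    intro r hr; rw [hgc]; simp only []; rw [if_neg (by omega)]
  have hgc0 : gc 0 = b i := by rw [hgcle 0 (Nat.zero_le m1)]; exact hg10
  have hgcend : gc (m1 + m2) = b j := by
    rcases Nat.eq_zero_or_pos m2 with h | h
    · subst h
      rw [hgcle _ (by omega), Nat.add_zero, hg1m, ← hg2r0, hg2rm]
    · rw [hgcgt _ (by omega)]
      rw [show m1 + m2 - m1 = m2 by omega, hg2rm]
  have hmid : gc m1 = g2r 0 := by rw [hgcle m1 (le_refl m1), hg1m, hg2r0]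
  have hgclen : len ℓ gc (m1 + m2) = len ℓ g1 m1 + len ℓ g2r m2 := by
    unfold len
    rw [Finset.range_eq_Ico, Finset.range_eq_Ico, Finset.range_eq_Ico, ← Finset.sum_Ico_consecutive _ (Nat.zero_le m1) (Nat.le_add_right m1 m2)]
    congr 1
    · refine Finset.sum_congr rfl fun r hr => ?_
      have hr' := (Finset.mem_Ico.1 hr).2
      rw [hgcle r (by omega), hgcle (r+1) (by omega)]
    · rw [Finset.sum_Ico_eq_sum_range, Finset.sum_Ico_eq_sum_range,
        show m1 + m2 - m1 = m2 by omega, show m2 - 0 = m2 by rfl]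
      refine Finset.sum_congr rfl fun k hk => ?_
      have hk' := Finset.mem_range.1 hk
      have e2 : gc (m1 + k + 1) = g2r (k + 1) := by
        rw [hgcgt _ (by omega)]; congr 1; omega
      have e1 : gc (m1 + k) = g2r k := by
        rcases Nat.eq_zero_or_pos k with h | h
        · subst h; rw [Nat.add_zero, hmid]
        · rw [hgcgt _ (by omega)]; congr 1; omega
      rw [Nat.zero_add, e1, e2]
  -- normalize to card V steps
  obtain ⟨g', h0', hM', hlen'⟩ := normalizeW ℓ hnn hdiag (le_refl (Fintype.card V)) (m1 + m2) gc
  have hHC := HC i j g' hij (h0'.trans hgc0) (hM'.trans hgcend)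
  have hsum : len ℓ gc (m1 + m2) < 1 := by
    rw [hgclen, hrev]
    rw [hε] at hx1 hx2
    linarith
  linarith

end dist

lemma max_sub_max_le (a bb θ : ℝ) (hθ : 0 ≤ θ) (hbb : 0 ≤ bb) :
    max (max (a - θ) 0 - max (bb - θ) 0) 0 ≤ max (a - bb) 0 := by
  rcases le_or_gt a θ with h | h
  · rw [max_eq_right (show a - θ ≤ 0 by linarith)]
    rw [max_eq_right (show 0 - max (bb - θ) 0 ≤ 0 by
      have := le_max_right (bb - θ) 0; linarith)]
    exact le_max_right _ _
  · rcases le_or_gt bb θ with h2 | h2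
    · rw [max_eq_right (show bb - θ ≤ 0 by linarith)]
      have e : max (a - θ) 0 - 0 = a - θ := by
        rw [max_eq_left (by linarith), sub_zero]
      rw [e]
      rw [max_eq_left (by linarith : (0:ℝ) ≤ a - θ)]
      exact le_trans (by linarith) (le_max_left (a - bb) 0)
    · rw [max_eq_left (by linarith : (0:ℝ) ≤ a - θ), max_eq_left (by linarith : (0:ℝ) ≤ bb - θ)]
      have e : a - θ - (bb - θ) = a - bb := by ring
      rw [e]

/-- the key level-set/coarea style bound: a ½-separated potential around `b i`
certifies capacity at least `h * s` across every scale. -/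
lemma levelcut (c : V → V → ℝ) (hc : ∀ x y, 0 ≤ c x y) {n : ℕ} (b : Fin n → V)
    (i : Fin n) (s : ℝ) (hs : 0 ≤ s)
    (hcut : ∀ W : Finset V, (∀ k, b k ∈ W ↔ k = i) → s ≤ cutval c W) :
    ∀ (N : ℕ) (h : ℝ) (ρ : V → ℝ), (Finset.image ρ Finset.univ).card ≤ N →
      (∀ x, 0 ≤ ρ x) → ρ (b i) = 0 → (∀ j, j ≠ i → h ≤ ρ (b j)) →
      h * s ≤ ∑ x, ∑ y, c x y * max (ρ y - ρ x) 0 := by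
  intro N
  induction N using Nat.strong_induction_on with
  | _ N ih =>
    intro h ρ hcard hρnn hρi hρj
    have RHSnn : (0:ℝ) ≤ ∑ x, ∑ y, c x y * max (ρ y - ρ x) 0 :=
      Finset.sum_nonneg fun x _ => Finset.sum_nonneg fun y _ =>
        mul_nonneg (hc x y) (le_max_right _ _)
    rcases le_or_gt h 0 with hh | hh
    · calc h * s ≤ 0 := mul_nonpos_of_nonpos_of_nonneg hh hs
        _ ≤ _ := RHSnn
    set P := (Finset.image ρ Finset.univ).filter (fun t => 0 < t) with hP
    by_cases hPne : P.Nonempty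
    · set θ := P.min' hPne with hθ
      have hθmem : θ ∈ P := Finset.min'_mem _ _
      have hθpos : 0 < θ := (Finset.mem_filter.1 hθmem).2
      have hθle : ∀ t ∈ Finset.image ρ Finset.univ, 0 < t → θ ≤ t := by
        intro t ht htpos
        exact Finset.min'_le _ _ (Finset.mem_filter.2 ⟨ht, htpos⟩)
      set W := Finset.univ.filter (fun x => ρ x ≤ 0) with hW
      have hWvalid : ∀ k, b k ∈ W ↔ k = i := by
        intro k
        constructor
        · intro hk
          by_contra hne
          have := hρj k hne
          have := (Finset.mem_filter.1 hk).2
          linarith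
        · rintro rfl
          exact Finset.mem_filter.2 ⟨Finset.mem_univ _, le_of_eq hρi⟩
      set ρ' : V → ℝ := fun x => max (ρ x - θ) 0 with hρ'
      have hcard' : (Finset.image ρ' Finset.univ).card < N := by
        have hsub : Finset.image ρ' Finset.univ ⊆
            insert 0 ((P.erase θ).image (fun t => t - θ)) := by
          intro t ht
          obtain ⟨x, -, rfl⟩ := Finset.mem_image.1 ht
          rcases le_or_gt (ρ x) θ with hx | hx
          · have hz : ρ' x = 0 := by
              show max (ρ x - θ) 0 = 0
              exact max_eq_right (by linarith)
            rw [hz]; exact Finset.mem_insert_self _ _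
          · have hz : ρ' x = ρ x - θ := by
              show max (ρ x - θ) 0 = ρ x - θ
              exact max_eq_left (by linarith)
            rw [hz]
            apply Finset.mem_insert_of_mem
            apply Finset.mem_image.2
            refine ⟨ρ x, Finset.mem_erase.2 ⟨by linarith, ?_⟩, rfl⟩
            exact Finset.mem_filter.2 ⟨Finset.mem_image_of_mem ρ (Finset.mem_univ x), by linarith⟩
        have h1 : (Finset.image ρ' Finset.univ).card ≤ (P.erase θ).card + 1 := by
          calc (Finset.image ρ' Finset.univ).card
              ≤ (insert 0 ((P.erase θ).image (fun t => t - θ))).card := Finset.card_le_card hsub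
            _ ≤ ((P.erase θ).image (fun t => t - θ)).card + 1 := Finset.card_insert_le _ _
            _ ≤ (P.erase θ).card + 1 := by
                exact add_le_add_left (Finset.card_image_le) 1
        have h2 : (P.erase θ).card + 1 = P.card := Finset.card_erase_add_one hθmem
        have h3 : P.card < (Finset.image ρ Finset.univ).card := by
          apply Finset.card_lt_card
          constructor
          · exact Finset.filter_subset _ _
          · intro hsup
            have h0mem : (0:ℝ) ∈ Finset.image ρ Finset.univ := by
              rw [← hρi]; exact Finset.mem_image_of_mem ρ (Finset.mem_univ _)
            have := Finset.mem_filter.1 (hsup h0mem)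
            linarith [this.2]
        omega
      have hρ'nn : ∀ x, 0 ≤ ρ' x := fun x => le_max_right _ _
      have hρ'i : ρ' (b i) = 0 := by
        show max (ρ (b i) - θ) 0 = 0
        rw [hρi]; exact max_eq_right (by linarith)
      have hρ'j : ∀ j, j ≠ i → h - θ ≤ ρ' (b j) := by
        intro j hj
        have := hρj j hj
        calc h - θ ≤ ρ (b j) - θ := by linarith
          _ ≤ ρ' (b j) := le_max_left _ _
      have IH := ih _ hcard' (h - θ) ρ' (le_refl _) hρ'nn hρ'i hρ'j
      -- pointwise key inequality
      have key : ∀ x y, c x y * max (ρ' y - ρ' x) 0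
          + θ * (if x ∈ W ∧ y ∉ W then c x y else 0) ≤ c x y * max (ρ y - ρ x) 0 := by
        intro x y
        by_cases hxy : x ∈ W ∧ y ∉ W
        · have hx0 : ρ x = 0 := le_antisymm (Finset.mem_filter.1 hxy.1).2 (hρnn x)
          have hy0 : 0 < ρ y := by
            by_contra hcon
            exact hxy.2 (Finset.mem_filter.2 ⟨Finset.mem_univ _, by linarith⟩)
          have hθy : θ ≤ ρ y :=
            hθle _ (Finset.mem_image_of_mem ρ (Finset.mem_univ y)) hy0
          have e1 : ρ' x = 0 := by
            show max (ρ x - θ) 0 = 0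
            rw [hx0]; exact max_eq_right (by linarith)
          have e2 : ρ' y = ρ y - θ := by
            show max (ρ y - θ) 0 = ρ y - θ
            exact max_eq_left (by linarith)
          rw [if_pos hxy, e1, e2, hx0]
          rw [max_eq_left (by linarith), max_eq_left (by linarith)]
          ring_nf
          exact le_of_eq (by ring)
        · rw [if_neg hxy, mul_zero, add_zero]
          apply mul_le_mul_of_nonneg_left _ (hc x y)
          exact max_sub_max_le (ρ y) (ρ x) θ (le_of_lt hθpos) (hρnn x)
      -- sum the indicator to the cut value
      have indsum : ∑ x, ∑ y, (if x ∈ W ∧ y ∉ W then c x y else 0) = cutval c W := by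
        unfold cutval
        rw [← Finset.sum_filter_add_sum_filter_not Finset.univ (fun x => x ∈ W)]
        have hfW : Finset.univ.filter (fun x => x ∈ W) = W := by
          ext x; simp
        have hfWc : Finset.univ.filter (fun x => ¬ x ∈ W) = Wᶜ := by
          ext x; simp
        have hzero : ∑ x ∈ Finset.univ.filter (fun x => ¬ x ∈ W), ∑ y,
            (if x ∈ W ∧ y ∉ W then c x y else 0) = 0 := by
          apply Finset.sum_eq_zero; intro x hx
          apply Finset.sum_eq_zero; intro y _
          rw [if_neg]; rintro ⟨h1, -⟩
          exact (Finset.mem_filter.1 hx).2 h1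
        rw [hzero, add_zero, hfW]
        refine Finset.sum_congr rfl fun x hx => ?_
        rw [← Finset.sum_filter_add_sum_filter_not Finset.univ (fun y => y ∉ W)]
        have hzero2 : ∑ y ∈ Finset.univ.filter (fun y => ¬ y ∉ W), (if x ∈ W ∧ y ∉ W then c x y else 0) = 0 := by
          apply Finset.sum_eq_zero; intro y hy
          rw [if_neg]; rintro ⟨-, h2⟩
          exact (Finset.mem_filter.1 hy).2 h2
        have hfilt : Finset.univ.filter (fun y => y ∉ W) = Wᶜ := by
          ext y; simp
        rw [hzero2, add_zero, hfilt]
        refine Finset.sum_congr rfl fun y hy => ?_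
        rw [if_pos ⟨hx, Finset.mem_compl.1 hy⟩]
      have sumkey : (∑ x, ∑ y, c x y * max (ρ' y - ρ' x) 0) + θ * cutval c W
          ≤ ∑ x, ∑ y, c x y * max (ρ y - ρ x) 0 := by
        rw [← indsum, Finset.mul_sum]
        rw [← Finset.sum_add_distrib]
        apply Finset.sum_le_sum
        intro x _
        rw [Finset.mul_sum, ← Finset.sum_add_distrib]
        exact Finset.sum_le_sum fun y _ => key x y
      have hWs : s ≤ cutval c W := hcut W hWvalid
      have : θ * s ≤ θ * cutval c W := mul_le_mul_of_nonneg_left hWs (le_of_lt hθpos)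
      calc h * s = (h - θ) * s + θ * s := by ring
        _ ≤ (∑ x, ∑ y, c x y * max (ρ' y - ρ' x) 0) + θ * cutval c W := add_le_add IH this
        _ ≤ _ := sumkey
    · -- no positive values of ρ : all terminals equal i, so univ is a valid cut
      have hall : ∀ k : Fin n, k = i := by
        intro k
        by_contra hk
        have h1 := hρj k hk
        have h2 : 0 < ρ (b k) := lt_of_lt_of_le hh h1
        exact hPne ⟨ρ (b k), Finset.mem_filter.2
          ⟨Finset.mem_image_of_mem ρ (Finset.mem_univ _), h2⟩⟩
      have huniv : ∀ k, b k ∈ (Finset.univ : Finset V) ↔ k = i := by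
        intro k; simp [hall k]
      have := hcut Finset.univ huniv
      have hzero : cutval c Finset.univ = 0 := by
        unfold cutval
        rw [Finset.compl_univ]
        simp
      rw [hzero] at this
      have : h * s ≤ 0 := mul_nonpos_of_nonneg_of_nonpos (le_of_lt hh) this
      linarith


section dualbound

variable (c : V → V → ℝ) {ℓ : V → V → ℝ} {n : ℕ} {b : Fin n → V}
variable (hcsym : ∀ x y, c x y = c y x) (hcnn : ∀ x y, 0 ≤ c x y)
variable (hnn : ∀ x y, 0 ≤ ℓ x y) (hsym : ∀ x y, ℓ x y = ℓ y x) (hdiag : ∀ x, ℓ x x = 0)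

/-- the potentials. -/
noncomputable def pot (ℓ : V → V → ℝ) (b : Fin n → V) (i : Fin n) (v : V) : ℝ :=
  min (dW ℓ (b i) v) (1/2)

include hnn in
lemma pot_nonneg (i : Fin n) (v : V) : 0 ≤ pot ℓ b i v :=
  le_min (dW_nonneg hnn _ _) (by norm_num)

lemma pot_le_half (i : Fin n) (v : V) : pot ℓ b i v ≤ 1/2 := min_le_right _ _

include hnn in
lemma pot_self (i : Fin n) : pot ℓ b i (b i) = 0 := by
  unfold pot
  rw [dW_self hnn]
  exact min_eq_left (by norm_num)

include hnn hsym in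
lemma pot_lip (i : Fin n) (x y : V) : pot ℓ b i y ≤ pot ℓ b i x + ℓ x y := by
  have htri : dW ℓ (b i) y ≤ dW ℓ (b i) x + ℓ x y := dW_triangle hnn _ _ _
  unfold pot
  rcases le_total (dW ℓ (b i) x) (1/2) with h | h
  · rw [min_eq_left h]
    exact le_trans (min_le_left _ _) htri
  · rw [min_eq_right h]
    have := hnn x y
    calc min (dW ℓ (b i) y) (1/2) ≤ 1/2 := min_le_right _ _
      _ ≤ 1/2 + ℓ x y := by linarith

include hnn hsym hdiag in
lemma pair_bound (hb : Function.Injective b)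
    (HC : ∀ (i j : Fin n) (g : ℕ → V), i ≠ j → g 0 = b i →
      g (Fintype.card V) = b j → 1 ≤ len ℓ g (Fintype.card V))
    (x y : V) :
    (∑ i, max (pot ℓ b i y - pot ℓ b i x) 0) + (∑ i, max (pot ℓ b i x - pot ℓ b i y) 0)
      ≤ ℓ x y := by
  have hzero : ∀ (u w : V) (i : Fin n), ¬ (dW ℓ (b i) u < 1/2) →
      max (pot ℓ b i w - pot ℓ b i u) 0 = 0 := by
    intro u w i hi
    push_neg at hi
    have h1 : pot ℓ b i u = 1/2 := min_eq_right hi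
    have h2 := pot_le_half (ℓ := ℓ) (b := b) i w
    rw [h1]
    exact max_eq_right (by linarith)
  have huniq : ∀ (u : V) (i i' : Fin n), i ≠ i' → dW ℓ (b i) u < 1/2 →
      ¬ (dW ℓ (b i') u < 1/2) := by
    intro u i i' hne hi hcon
    have := dW_sep hnn hsym hdiag b HC hne u
    linarith
  have hS : ∀ (u w : V) (i : Fin n), dW ℓ (b i) u < 1/2 →
      ∑ k, max (pot ℓ b k w - pot ℓ b k u) 0 = max (pot ℓ b i w - pot ℓ b i u) 0 := by
    intro u w i hi
    apply Finset.sum_eq_single i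
    · intro k _ hk
      exact hzero u w k (huniq u i k (Ne.symm hk) hi)
    · intro hk; exact absurd (Finset.mem_univ i) hk
  have hZ : ∀ (u w : V), (¬ ∃ i, dW ℓ (b i) u < 1/2) →
      ∑ k, max (pot ℓ b k w - pot ℓ b k u) 0 = 0 := by
    intro u w hu
    push_neg at hu
    apply Finset.sum_eq_zero
    intro k _
    exact hzero u w k (not_lt.2 (hu k))
  by_cases hx : ∃ i, dW ℓ (b i) x < 1/2 <;> by_cases hy : ∃ j, dW ℓ (b j) y < 1/2
  · obtain ⟨i, hi⟩ := hx
    obtain ⟨j, hj⟩ := hy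
    rw [hS x y i hi, hS y x j hj]
    rcases eq_or_ne i j with rfl | hij
    · have l1 : pot ℓ b i y - pot ℓ b i x ≤ ℓ x y := by
        have := pot_lip hnn hsym (b := b) i x y; linarith
      have l2 : pot ℓ b i x - pot ℓ b i y ≤ ℓ x y := by
        have := pot_lip hnn hsym (b := b) i y x
        rw [hsym y x] at this; linarith
      rcases le_total (pot ℓ b i y) (pot ℓ b i x) with h | h
      · rw [max_eq_right (by linarith), max_eq_left (by linarith)]; linarith
      · rw [max_eq_left (by linarith), max_eq_right (by linarith)]; linarith
    · have e1 : pot ℓ b i x = dW ℓ (b i) x := min_eq_left (le_of_lt hi)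
      have e2 : pot ℓ b j y = dW ℓ (b j) y := min_eq_left (le_of_lt hj)
      have t1 : max (pot ℓ b i y - pot ℓ b i x) 0 ≤ 1/2 - dW ℓ (b i) x := by
        apply max_le
        · have := pot_le_half (ℓ := ℓ) (b := b) i y; rw [e1] at *; linarith
        · linarith
      have t2 : max (pot ℓ b j x - pot ℓ b j y) 0 ≤ 1/2 - dW ℓ (b j) y := by
        apply max_le
        · have := pot_le_half (ℓ := ℓ) (b := b) j x; rw [e2] at *; linarith
        · linarith
      have sep : 1 ≤ dW ℓ (b i) x + dW ℓ (b j) x := dW_sep hnn hsym hdiag b HC hij x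
      have tri : dW ℓ (b j) x ≤ dW ℓ (b j) y + ℓ x y := by
        have := dW_triangle hnn (b j) y x
        rw [hsym y x] at this; linarith
      linarith
  · obtain ⟨i, hi⟩ := hx
    rw [hS x y i hi, hZ y x hy, add_zero]
    apply max_le
    · have := pot_lip hnn hsym (b := b) i x y; linarith
    · exact hnn x y
  · obtain ⟨j, hj⟩ := hy
    rw [hS y x j hj, hZ x y hx, zero_add]
    apply max_le
    · have := pot_lip hnn hsym (b := b) j y x
      rw [hsym y x] at this; linarith
    · exact hnn x y
  · rw [hZ x y hx, hZ y x hy, add_zero]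
    exact hnn x y

include hcsym hcnn hnn hsym hdiag in
/-- **Dual bound**: any feasible metric certifies total cut value. -/
lemma dual_bound (hb : Function.Injective b)
    (HC : ∀ (i j : Fin n) (g : ℕ → V), i ≠ j → g 0 = b i →
      g (Fintype.card V) = b j → 1 ≤ len ℓ g (Fintype.card V))
    (s : Fin n → ℝ) (hs : ∀ i, 0 ≤ s i)
    (hcut : ∀ i (W : Finset V), (∀ k, b k ∈ W ↔ k = i) → s i ≤ cutval c W) :
    ∑ i, s i ≤ ∑ x, ∑ y, c x y * ℓ x y := by
  have per_i : ∀ i, (1/2) * s i ≤ ∑ x, ∑ y, c x y * max (pot ℓ b i y - pot ℓ b i x) 0 := by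
    intro i
    exact levelcut c hcnn b i (s i) (hs i) (hcut i) _ (1/2) (pot ℓ b i)
      (le_refl _) (pot_nonneg hnn i) (pot_self hnn i)
      (fun j hj => by
        have hsep := dW_sep hnn hsym hdiag b HC (Ne.symm hj) (b j)
        have h0 : dW ℓ (b j) (b j) = 0 := dW_self hnn _
        rw [h0] at hsep
        exact le_min (by linarith) (le_refl _))
  set T := ∑ x, ∑ y, c x y * (∑ i, max (pot ℓ b i y - pot ℓ b i x) 0) with hT
  have hsumswap : ∑ i, ∑ x, ∑ y, c x y * max (pot ℓ b i y - pot ℓ b i x) 0 = T := by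
    rw [hT]
    rw [Finset.sum_comm]
    refine Finset.sum_congr rfl fun x _ => ?_
    rw [Finset.sum_comm]
    refine Finset.sum_congr rfl fun y _ => ?_
    rw [Finset.mul_sum]
  have hTT : (1/2) * ∑ i, s i ≤ T := by
    rw [← hsumswap, Finset.mul_sum]
    exact Finset.sum_le_sum fun i _ => per_i i
  have hsym2 : T = ∑ x, ∑ y, c x y * (∑ i, max (pot ℓ b i x - pot ℓ b i y) 0) := by
    rw [hT, Finset.sum_comm]
    refine Finset.sum_congr rfl fun x _ => Finset.sum_congr rfl fun y _ => ?_
    rw [hcsym y x]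
  have h2T : 2 * T ≤ ∑ x, ∑ y, c x y * ℓ x y := by
    have step1 : 2 * T = (∑ x, ∑ y, c x y * (∑ i, max (pot ℓ b i y - pot ℓ b i x) 0))
        + (∑ x, ∑ y, c x y * (∑ i, max (pot ℓ b i x - pot ℓ b i y) 0)) := by
      rw [← hT, ← hsym2]; ring
    have step2 : (∑ x, ∑ y, c x y * (∑ i, max (pot ℓ b i y - pot ℓ b i x) 0))
        + (∑ x, ∑ y, c x y * (∑ i, max (pot ℓ b i x - pot ℓ b i y) 0))
        = ∑ x, ∑ y, c x y *
        ((∑ i, max (pot ℓ b i y - pot ℓ b i x) 0) + (∑ i, max (pot ℓ b i x - pot ℓ b i y) 0)) := by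
      rw [← Finset.sum_add_distrib]
      refine Finset.sum_congr rfl fun x _ => ?_
      rw [← Finset.sum_add_distrib]
      refine Finset.sum_congr rfl fun y _ => ?_
      ring
    rw [step1, step2]
    refine Finset.sum_le_sum fun x _ => Finset.sum_le_sum fun y _ => ?_
    exact mul_le_mul_of_nonneg_left (pair_bound hnn hsym hdiag hb HC x y) (hcnn x y)
  linarith

end dualbound

section LP

variable {n : ℕ}

/-- admissible labeled walks: the primal LP variables. -/
def Adm (b : Fin n → V) (q : (Fin n × Fin n) × (Fin (Fintype.card V + 1) → V)) : Prop :=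
  q.1.1 ≠ q.1.2 ∧ q.2 0 = b q.1.1 ∧ q.2 (Fin.last _) = b q.1.2

instance (b : Fin n → V) : DecidablePred (Adm b) := fun q => by
  unfold Adm; infer_instance

/-- the ℕ-walk associated with an admissible walk. -/
def wk (b : Fin n → V) (q : {q // Adm b q}) : ℕ → V :=
  fun r => q.val.2 ⟨min r (Fintype.card V), Nat.lt_succ_of_le (Nat.min_le_right _ _)⟩

lemma wk_zero (b : Fin n → V) (q : {q // Adm b q}) : wk b q 0 = b q.val.1.1 := by
  have : (⟨min 0 (Fintype.card V), by omega⟩ : Fin (Fintype.card V + 1)) = 0 := by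
    apply Fin.ext; simp
  rw [wk, this]
  exact q.prop.2.1

lemma wk_last (b : Fin n → V) (q : {q // Adm b q}) :
    wk b q (Fintype.card V) = b q.val.1.2 := by
  have : (⟨min (Fintype.card V) (Fintype.card V), by omega⟩ : Fin (Fintype.card V + 1))
      = Fin.last _ := by
    apply Fin.ext; simp [Fin.last]
  rw [wk, this]
  exact q.prop.2.2

lemma wk_agree (b : Fin n → V) (q : {q // Adm b q}) (g : ℕ → V)
    (hg : ∀ r ≤ Fintype.card V, ∀ h : r < Fintype.card V + 1, g r = q.val.2 ⟨r, h⟩) :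
    ∀ r ≤ Fintype.card V, wk b q r = g r := by
  intro r hr
  rw [hg r hr (by omega), wk]
  have he : (⟨min r (Fintype.card V), Nat.lt_succ_of_le (Nat.min_le_right _ _)⟩ :
      Fin (Fintype.card V + 1)) = ⟨r, by omega⟩ := Fin.ext (by simp [Nat.min_eq_left hr])
  rw [he]

/-- usage vector of an admissible walk. -/
noncomputable def uf (b : Fin n → V) (q : {q // Adm b q}) : V × V → ℝ :=
  fun e => usg (wk b q) (Fintype.card V) e.1 e.2

lemma uf_nonneg (b : Fin n → V) (q : {q // Adm b q}) (e : V × V) : 0 ≤ uf b q e :=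
  usg_nonneg _ _ _ _

lemma stepCnt_nat (g : ℕ → V) (m : ℕ) (x y : V) : ∃ k : ℕ, stepCnt g m x y = k := by
  induction m with
  | zero => exact ⟨0, by simp [stepCnt]⟩
  | succ m ih =>
    obtain ⟨k, hk⟩ := ih
    unfold stepCnt at *
    rw [Finset.sum_range_succ, hk]
    by_cases h : g m = x ∧ g (m+1) = y
    · exact ⟨k+1, by rw [if_pos h]; push_cast; ring⟩
    · exact ⟨k, by rw [if_neg h]; ring⟩

lemma usg_nat (g : ℕ → V) (m : ℕ) (x y : V) : ∃ k : ℕ, usg g m x y = k := by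
  unfold usg
  by_cases h : x = y
  · exact ⟨0, by rw [if_pos h]; simp⟩
  · obtain ⟨k1, h1⟩ := stepCnt_nat g m x y
    obtain ⟨k2, h2⟩ := stepCnt_nat g m y x
    exact ⟨k1 + k2, by rw [if_neg h, h1, h2]; push_cast; ring⟩

lemma usg_pos_ge_one (g : ℕ → V) (m : ℕ) (x y : V) (h : usg g m x y ≠ 0) :
    1 ≤ usg g m x y := by
  obtain ⟨k, hk⟩ := usg_nat g m x y
  rw [hk] at h ⊢
  have hk0 : k ≠ 0 := fun h0 => h (by rw [h0]; norm_num)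
  exact_mod_cast Nat.one_le_iff_ne_zero.2 hk0

lemma walk_const (g : ℕ → V) (m : ℕ) (h : ∀ r < m, g r = g (r+1)) : g 0 = g m := by
  induction m with
  | zero => rfl
  | succ m ih =>
    rw [ih (fun r hr => h r (by omega)), h m (by omega)]

lemma stepCnt_one_le (g : ℕ → V) (m : ℕ) {r : ℕ} (hr : r < m) :
    1 ≤ stepCnt g m (g r) (g (r+1)) := by
  unfold stepCnt
  have key := Finset.single_le_sum (f := fun t => if g t = g r ∧ g (t+1) = g (r+1) then (1:ℝ) else 0)
    (fun t _ => by positivity) (Finset.mem_range.2 hr)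
  simpa using key

/-- every admissible walk uses at least one real edge. -/
lemma exists_nonstall (b : Fin n → V) (hb : Function.Injective b) (q : {q // Adm b q}) :
    ∃ e : V × V, e.1 ≠ e.2 ∧ 1 ≤ uf b q e := by
  have hne : wk b q 0 ≠ wk b q (Fintype.card V) := by
    rw [wk_zero, wk_last]
    intro h
    exact q.prop.1 (hb h)
  have : ¬ (∀ r < Fintype.card V, wk b q r = wk b q (r+1)) := by
    intro h
    exact hne (walk_const _ _ h)
  push_neg at this
  obtain ⟨r, hr, hne'⟩ := this
  refine ⟨(wk b q r, wk b q (r+1)), hne', ?_⟩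
  unfold uf usg
  rw [if_neg hne']
  have h1 := stepCnt_one_le (wk b q) (Fintype.card V) hr
  have h2 := stepCnt_nonneg (wk b q) (Fintype.card V) (wk b q (r+1)) (wk b q r)
  simp only []
  linarith

end LP

section Phi

variable {n : ℕ} (b : Fin n → V)

/-- primal feasible set for capacity vector `z`. -/
def FEAS (z : V × V → ℝ) : Set ({q // Adm b q} → ℝ) :=
  {w | (∀ q, 0 ≤ w q) ∧ ∀ e : V × V, ∑ q, w q * uf b q e ≤ z e}

/-- primal LP value. -/
noncomputable def phi (z : V × V → ℝ) : ℝ :=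
  sSup ((fun w : {q // Adm b q} → ℝ => ∑ q, w q) '' FEAS b z)

lemma FEAS_zero_mem {z : V × V → ℝ} (hz : ∀ e, 0 ≤ z e) :
    (fun _ => (0:ℝ)) ∈ FEAS b z := by
  refine ⟨fun q => le_refl 0, fun e => ?_⟩
  simp [hz e]

variable {b}
variable (hb : Function.Injective b)

include hb in
lemma sum_le_of_mem {z : V × V → ℝ} {w : {q // Adm b q} → ℝ} (hw : w ∈ FEAS b z) :
    ∑ q, w q ≤ ∑ e : V × V, z e := by
  have per_q : ∀ q, w q ≤ ∑ e : V × V, w q * uf b q e := by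
    intro q
    obtain ⟨e0, -, he0⟩ := exists_nonstall b hb q
    have h1 : w q ≤ w q * uf b q e0 := by
      nth_rewrite 1 [← mul_one (w q)]
      exact mul_le_mul_of_nonneg_left he0 (hw.1 q)
    refine le_trans h1 (Finset.single_le_sum (f := fun e => w q * uf b q e) ?_ (Finset.mem_univ e0))
    intro e _
    exact mul_nonneg (hw.1 q) (uf_nonneg b q e)
  calc ∑ q, w q ≤ ∑ q, ∑ e : V × V, w q * uf b q e := Finset.sum_le_sum fun q _ => per_q q
    _ = ∑ e : V × V, ∑ q, w q * uf b q e := Finset.sum_comm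
    _ ≤ ∑ e : V × V, z e := Finset.sum_le_sum fun e _ => hw.2 e

include hb in
lemma phi_bdd (z : V × V → ℝ) :
    BddAbove ((fun w : {q // Adm b q} → ℝ => ∑ q, w q) '' FEAS b z) := by
  refine ⟨∑ e : V × V, z e, ?_⟩
  rintro r ⟨w, hw, rfl⟩
  exact sum_le_of_mem hb hw

include hb in
lemma le_phi {z : V × V → ℝ} {w : {q // Adm b q} → ℝ} (hw : w ∈ FEAS b z) :
    ∑ q, w q ≤ phi b z :=
  le_csSup (phi_bdd hb z) ⟨w, hw, rfl⟩

lemma phi_le {z : V × V → ℝ} {B : ℝ} (hne : (FEAS b z).Nonempty)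
    (hB : ∀ w ∈ FEAS b z, ∑ q, w q ≤ B) : phi b z ≤ B := by
  apply csSup_le
  · obtain ⟨w, hw⟩ := hne
    exact ⟨∑ q, w q, w, hw, rfl⟩
  · rintro r ⟨w, hw, rfl⟩
    exact hB w hw

include hb in
lemma phi_nonneg {z : V × V → ℝ} (hz : ∀ e, 0 ≤ z e) : 0 ≤ phi b z := by
  have := le_phi hb (FEAS_zero_mem b hz)
  simpa using this

include hb in
lemma phi_mono {z1 z2 : V × V → ℝ} (h1 : ∀ e, 0 ≤ z1 e) (h12 : ∀ e, z1 e ≤ z2 e) :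
    phi b z1 ≤ phi b z2 := by
  apply phi_le ⟨_, FEAS_zero_mem b h1⟩
  intro w hw
  exact le_phi hb ⟨hw.1, fun e => le_trans (hw.2 e) (h12 e)⟩

include hb in
lemma phi_zero : phi b (fun _ => 0) = 0 := by
  refine le_antisymm (phi_le ⟨_, FEAS_zero_mem b (fun _ => le_refl 0)⟩ ?_)
    (phi_nonneg hb (fun _ => le_refl 0))
  intro w hw
  have := sum_le_of_mem hb hw
  simpa using this

lemma reduce_edge {z : V × V → ℝ} {w : {q // Adm b q} → ℝ} (hw : w ∈ FEAS b z)
    (e : V × V) {a : ℝ} (ha0 : 0 ≤ a) (hale : a ≤ z e) :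
    ∃ w' ∈ FEAS b (Function.update z e a), (∑ q, w q) ≤ (∑ q, w' q) + (z e - a) := by
  set U := ∑ q, w q * uf b q e with hU
  by_cases hUa : U ≤ a
  · refine ⟨w, ⟨hw.1, fun e' => ?_⟩, by linarith⟩
    rcases eq_or_ne e' e with rfl | hne
    · rw [Function.update_self]; exact hUa
    · rw [Function.update_of_ne hne]; exact hw.2 e'
  · push_neg at hUa
    have hU0 : 0 < U := lt_of_le_of_lt ha0 hUa
    set ρ := a / U with hρ
    have hρ0 : 0 ≤ ρ := div_nonneg ha0 (le_of_lt hU0)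
    have hρ1 : ρ ≤ 1 := by rw [hρ, div_le_one hU0]; linarith
    set w' := fun q => if uf b q e = 0 then w q else ρ * w q with hw'
    have hw'le : ∀ q, w' q ≤ w q := by
      intro q
      rw [hw']
      simp only []
      split
      · exact le_refl _
      · nlinarith [hw.1 q]
    have hw'0 : ∀ q, 0 ≤ w' q := by
      intro q
      rw [hw']
      simp only []
      split
      · exact hw.1 q
      · exact mul_nonneg hρ0 (hw.1 q)
    have husage : ∑ q, w' q * uf b q e = a := by
      have : ∀ q, w' q * uf b q e = ρ * (w q * uf b q e) := by
        intro q
        rw [hw']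
        simp only []
        split
        · rename_i h0
          rw [h0]; ring
        · ring
      rw [Finset.sum_congr rfl (fun q _ => this q), ← Finset.mul_sum, ← hU, hρ]
      field_simp
    refine ⟨w', ⟨hw'0, fun e' => ?_⟩, ?_⟩
    · rcases eq_or_ne e' e with rfl | hne
      · rw [Function.update_self, husage]
      · rw [Function.update_of_ne hne]
        refine le_trans (Finset.sum_le_sum fun q _ => ?_) (hw.2 e')
        exact mul_le_mul_of_nonneg_right (hw'le q) (uf_nonneg b q e')
    · have loss : ∑ q, (w q - w' q) ≤ (1 - ρ) * U := by
        rw [hU, Finset.mul_sum]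
        apply Finset.sum_le_sum
        intro q _
        rw [hw']
        simp only []
        split
        · rename_i h0
          rw [h0]
          nlinarith [hw.1 q]
        · rename_i h0
          have h1 : 1 ≤ uf b q e := usg_pos_ge_one _ _ _ _ h0
          have key := mul_nonneg (mul_nonneg (by linarith : (0:ℝ) ≤ 1 - ρ) (hw.1 q))
            (by linarith : (0:ℝ) ≤ uf b q e - 1)
          nlinarith [key]
      rw [Finset.sum_sub_distrib] at loss
      have : (1 - ρ) * U = U - a := by
        rw [hρ]; field_simp
      rw [this] at loss
      linarith [hw.2 e]

include hb in
lemma phi_lip {z z' : V × V → ℝ} (hz : ∀ e, 0 ≤ z e) (hz' : ∀ e, 0 ≤ z' e) :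
    phi b z' ≤ phi b z + ∑ e : V × V, max (z' e - z e) 0 := by
  have main : ∀ s : Finset (V × V),
      phi b z' ≤ phi b (s.piecewise (fun e => min (z e) (z' e)) z')
        + ∑ e ∈ s, max (z' e - z e) 0 := by
    intro s
    induction s using Finset.induction with
    | empty => simp [Finset.piecewise_empty]
    | @insert e s ha ih =>
      set mid := s.piecewise (fun e => min (z e) (z' e)) z' with hmid
      have hmid0 : ∀ e', 0 ≤ mid e' := by
        intro e'
        rw [hmid]
        by_cases h : e' ∈ s
        · rw [Finset.piecewise_eq_of_mem _ _ _ h]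
          exact le_min (hz e') (hz' e')
        · rw [Finset.piecewise_eq_of_notMem _ _ _ h]
          exact hz' e'
      have hmide : mid e = z' e := by
        rw [hmid, Finset.piecewise_eq_of_notMem _ _ _ ha]
      have step : phi b mid ≤ phi b (Function.update mid e (min (z e) (z' e)))
          + (z' e - min (z e) (z' e)) := by
        apply phi_le ⟨_, FEAS_zero_mem b hmid0⟩
        intro w hw
        obtain ⟨w', hw', hsum⟩ := reduce_edge hw e (le_min (hz e) (hz' e))
          (by rw [hmide]; exact min_le_right _ _)
        have := le_phi hb hw'
        rw [hmide] at hsum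
        linarith
      have hmax : z' e - min (z e) (z' e) = max (z' e - z e) 0 := by
        rcases le_total (z e) (z' e) with h | h
        · rw [min_eq_left h, max_eq_left (by linarith)]
        · rw [min_eq_right h, max_eq_right (by linarith)]
          ring
      rw [Finset.sum_insert ha, Finset.piecewise_insert]
      rw [hmax] at step
      rw [← hmid]
      linarith
  have final := main Finset.univ
  rw [Finset.piecewise_univ] at final
  have hmono : phi b (fun e => min (z e) (z' e)) ≤ phi b z :=
    phi_mono hb (fun e => le_min (hz e) (hz' e)) (fun e => min_le_left _ _)
  linarith

include hb in
lemma phi_concave {z1 z2 : V × V → ℝ} (h1 : ∀ e, 0 ≤ z1 e) (h2 : ∀ e, 0 ≤ z2 e)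
    {a bb : ℝ} (ha : 0 ≤ a) (hbb : 0 ≤ bb) (hab : a + bb = 1) :
    a * phi b z1 + bb * phi b z2 ≤ phi b (fun e => a * z1 e + bb * z2 e) := by
  rcases eq_or_lt_of_le ha with rfl | hapos
  · have hbb1 : bb = 1 := by linarith
    subst hbb1
    simp only [zero_mul, zero_add, one_mul]
    apply le_of_eq
    congr 1
  rcases eq_or_lt_of_le hbb with rfl | hbpos
  · have ha1 : a = 1 := by linarith
    subst ha1
    simp only [zero_mul, add_zero, one_mul]
    apply le_of_eq
    congr 1
  have key : ∀ w1 ∈ FEAS b z1, ∀ w2 ∈ FEAS b z2,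
      a * (∑ q, w1 q) + bb * (∑ q, w2 q) ≤ phi b (fun e => a * z1 e + bb * z2 e) := by
    intro w1 hw1 w2 hw2
    have hmem : (fun q => a * w1 q + bb * w2 q) ∈ FEAS b (fun e => a * z1 e + bb * z2 e) := by
      constructor
      · intro q
        have := hw1.1 q; have := hw2.1 q
        positivity
      · intro e
        have e1 : ∑ q, (a * w1 q + bb * w2 q) * uf b q e
            = a * (∑ q, w1 q * uf b q e) + bb * (∑ q, w2 q * uf b q e) := by
          rw [Finset.mul_sum, Finset.mul_sum, ← Finset.sum_add_distrib]
          refine Finset.sum_congr rfl fun q _ => by ring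
        rw [e1]
        dsimp only
        have k1 := mul_le_mul_of_nonneg_left (hw1.2 e) ha
        have k2 := mul_le_mul_of_nonneg_left (hw2.2 e) hbb
        linarith
    have := le_phi hb hmem
    have esum : ∑ q, (a * w1 q + bb * w2 q) = a * (∑ q, w1 q) + bb * (∑ q, w2 q) := by
      rw [Finset.mul_sum, Finset.mul_sum, ← Finset.sum_add_distrib]
    rw [esum] at this
    exact this
  have step1 : ∀ w2 ∈ FEAS b z2,
      a * phi b z1 + bb * (∑ q, w2 q) ≤ phi b (fun e => a * z1 e + bb * z2 e) := by
    intro w2 hw2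
    have : phi b z1 ≤ (phi b (fun e => a * z1 e + bb * z2 e) - bb * (∑ q, w2 q)) / a := by
      apply phi_le ⟨_, FEAS_zero_mem b h1⟩
      intro w1 hw1
      have := key w1 hw1 w2 hw2
      rw [le_div_iff₀ hapos]
      linarith
    rw [le_div_iff₀ hapos] at this
    linarith
  have : phi b z2 ≤ (phi b (fun e => a * z1 e + bb * z2 e) - a * phi b z1) / bb := by
    apply phi_le ⟨_, FEAS_zero_mem b h2⟩
    intro w2 hw2
    have := step1 w2 hw2
    rw [le_div_iff₀ hbpos]
    linarith
  rw [le_div_iff₀ hbpos] at this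
  linarith

include hb in
lemma phi_shift {z : V × V → ℝ} (hz : ∀ e, 0 ≤ z e) (q0 : {q // Adm b q}) :
    phi b z + 1 ≤ phi b (fun e => z e + uf b q0 e) := by
  have key : ∀ w ∈ FEAS b z, (∑ q, w q) + 1 ≤ phi b (fun e => z e + uf b q0 e) := by
    intro w hw
    set w2 := fun q => w q + (if q = q0 then (1:ℝ) else 0) with hw2
    have hmem : w2 ∈ FEAS b (fun e => z e + uf b q0 e) := by
      constructor
      · intro q
        rw [hw2]
        dsimp only
        have := hw.1 q
        split <;> linarith
      · intro e
        have e1 : ∑ q, w2 q * uf b q e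
            = (∑ q, w q * uf b q e) + (∑ q, (if q = q0 then (1:ℝ) else 0) * uf b q e) := by
          rw [← Finset.sum_add_distrib]
          refine Finset.sum_congr rfl fun q _ => by rw [hw2]; ring
        have e2 : ∑ q, (if q = q0 then (1:ℝ) else 0) * uf b q e = uf b q0 e := by
          rw [Finset.sum_eq_single q0]
          · simp
          · intro q _ hq; rw [if_neg hq]; ring
          · intro h; exact absurd (Finset.mem_univ q0) h
        rw [e1, e2]
        dsimp only
        have := hw.2 e
        linarith
    have hs := le_phi hb hmem
    have e3 : ∑ q, w2 q = (∑ q, w q) + 1 := by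
      rw [hw2, Finset.sum_add_distrib]
      congr 1
      rw [Finset.sum_eq_single q0]
      · simp
      · intro q _ hq; rw [if_neg hq]
      · intro h; exact absurd (Finset.mem_univ q0) h
    rw [e3] at hs
    exact hs
  have : phi b z ≤ phi b (fun e => z e + uf b q0 e) - 1 := by
    apply phi_le ⟨_, FEAS_zero_mem b hz⟩
    intro w hw
    have := key w hw
    linarith
  linarith

end Phi
section Hat

variable {n : ℕ} {b : Fin n → V} (hb : Function.Injective b)

/-- globally extended concave LP value function. -/
noncomputable def phat (b : Fin n → V) (z : V × V → ℝ) : ℝ :=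
  phi b (fun e => max (z e) 0) - ∑ e : V × V, max (- z e) 0

lemma phat_eq {z : V × V → ℝ} (hz : ∀ e, 0 ≤ z e) : phat b z = phi b z := by
  unfold phat
  have h1 : (fun e => max (z e) 0) = z := funext fun e => max_eq_left (hz e)
  have h2 : ∑ e : V × V, max (- z e) 0 = 0 :=
    Finset.sum_eq_zero fun e _ => max_eq_right (by linarith [hz e])
  rw [h1, h2, sub_zero]

include hb in
lemma phat_concave {z1 z2 : V × V → ℝ} {a bb : ℝ} (ha : 0 ≤ a) (hbb : 0 ≤ bb)
    (hab : a + bb = 1) :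
    a * phat b z1 + bb * phat b z2 ≤ phat b (fun e => a * z1 e + bb * z2 e) := by
  classical
  set u := fun e => max (a * z1 e + bb * z2 e) 0 with hu
  set v := fun e => a * max (z1 e) 0 + bb * max (z2 e) 0 with hv
  have huv : ∀ e, u e ≤ v e := by
    intro e
    rw [hu, hv]
    dsimp only
    apply max_le
    · have := mul_le_mul_of_nonneg_left (le_max_left (z1 e) 0) ha
      have := mul_le_mul_of_nonneg_left (le_max_left (z2 e) 0) hbb
      linarith
    · have := mul_nonneg ha (le_max_right (z1 e) 0)
      have := mul_nonneg hbb (le_max_right (z2 e) 0)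
      linarith
  have hident : ∀ e, v e - u e
      = a * max (- z1 e) 0 + bb * max (- z2 e) 0 - max (-(a * z1 e + bb * z2 e)) 0 := by
    intro e
    rw [hu, hv]
    dsimp only
    have i1 : max (z1 e) 0 = z1 e + max (- z1 e) 0 := by
      rcases le_total (z1 e) 0 with h | h
      · rw [max_eq_right h, max_eq_left (by linarith)]; ring
      · rw [max_eq_left h, max_eq_right (by linarith)]; ring
    have i2 : max (z2 e) 0 = z2 e + max (- z2 e) 0 := by
      rcases le_total (z2 e) 0 with h | h
      · rw [max_eq_right h, max_eq_left (by linarith)]; ring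
      · rw [max_eq_left h, max_eq_right (by linarith)]; ring
    have i3 : max (a * z1 e + bb * z2 e) 0
        = a * z1 e + bb * z2 e + max (-(a * z1 e + bb * z2 e)) 0 := by
      rcases le_total (a * z1 e + bb * z2 e) 0 with h | h
      · rw [max_eq_right h, max_eq_left (by linarith)]; ring
      · rw [max_eq_left h, max_eq_right (by linarith)]; ring
    rw [i1, i2, i3]
    ring
  have hu0 : ∀ e, 0 ≤ u e := fun e => le_max_right _ _
  have hv0 : ∀ e, 0 ≤ v e := fun e => le_trans (hu0 e) (huv e)
  have hlip : phi b v ≤ phi b u + ∑ e : V × V, (v e - u e) := by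
    have := phi_lip hb hu0 hv0
    have he : ∀ e : V × V, max (v e - u e) 0 = v e - u e :=
      fun e => max_eq_left (by linarith [huv e])
    rw [Finset.sum_congr rfl (fun e _ => he e)] at this
    exact this
  have hconc : a * phi b (fun e => max (z1 e) 0) + bb * phi b (fun e => max (z2 e) 0)
      ≤ phi b v :=
    phi_concave hb (fun e => le_max_right _ _) (fun e => le_max_right _ _) ha hbb hab
  have hsum : ∑ e : V × V, (v e - u e)
      = a * (∑ e : V × V, max (- z1 e) 0) + bb * (∑ e : V × V, max (- z2 e) 0)
        - ∑ e : V × V, max (-(a * z1 e + bb * z2 e)) 0 := by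
    rw [Finset.sum_congr rfl (fun e _ => hident e)]
    rw [Finset.sum_sub_distrib, Finset.sum_add_distrib, Finset.mul_sum, Finset.mul_sum]
  unfold phat
  dsimp only
  rw [← hu]
  linarith [hlip, hconc, hsum.le, hsum.ge]

include hb in
lemma phat_lipbound (z z' : V × V → ℝ) :
    |phat b z - phat b z'| ≤ 2 * ∑ e : V × V, |z e - z' e| := by
  have one : ∀ t t' : ℝ, max t 0 - max t' 0 ≤ |t - t'| := by
    intro t t'
    rcases le_total t 0 with h | h
    · have e1 : max t 0 = 0 := max_eq_right h
      have h2 : (0:ℝ) ≤ max t' 0 := le_max_right _ _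
      have h3 := abs_nonneg (t - t')
      linarith
    · have e1 : max t 0 = t := max_eq_left h
      have h2 : t' ≤ max t' 0 := le_max_left _ _
      have h3 : t - t' ≤ |t - t'| := le_abs_self _
      linarith
  have habs : ∀ t t' : ℝ, |max t 0 - max t' 0| ≤ |t - t'| := by
    intro t t'
    rw [abs_le]
    constructor
    · have := one t' t
      rw [abs_sub_comm] at this
      linarith
    · exact one t t'
  have hposle : ∀ t t' : ℝ, max (t - t') 0 ≤ |t - t'| := by
    intro t t'
    apply max_le (le_abs_self _) (abs_nonneg _)
  have bound1 : |phi b (fun e => max (z e) 0) - phi b (fun e => max (z' e) 0)|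
      ≤ ∑ e : V × V, |z e - z' e| := by
    have d1 : phi b (fun e => max (z e) 0) ≤ phi b (fun e => max (z' e) 0)
        + ∑ e : V × V, |z e - z' e| := by
      have := phi_lip hb (z := fun e => max (z' e) 0) (z' := fun e => max (z e) 0)
        (fun e => le_max_right _ _) (fun e => le_max_right _ _)
      refine le_trans this (add_le_add_right (Finset.sum_le_sum fun e _ => ?_) _)
      exact le_trans (hposle _ _) (le_trans (habs (z e) (z' e)) (le_refl _))
    have d2 : phi b (fun e => max (z' e) 0) ≤ phi b (fun e => max (z e) 0)
        + ∑ e : V × V, |z e - z' e| := by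
      have := phi_lip hb (z := fun e => max (z e) 0) (z' := fun e => max (z' e) 0)
        (fun e => le_max_right _ _) (fun e => le_max_right _ _)
      refine le_trans this (add_le_add_right (Finset.sum_le_sum fun e _ => ?_) _)
      refine le_trans (hposle _ _) ?_
      rw [abs_sub_comm (z e) (z' e)]
      exact habs (z' e) (z e)
    rw [abs_le]
    constructor <;> linarith
  have bound2 : |(∑ e : V × V, max (- z e) 0) - ∑ e : V × V, max (- z' e) 0|
      ≤ ∑ e : V × V, |z e - z' e| := by
    rw [← Finset.sum_sub_distrib]
    refine le_trans (Finset.abs_sum_le_sum_abs _ _) (Finset.sum_le_sum fun e _ => ?_)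
    have := habs (- z e) (- z' e)
    have he : |- z e - - z' e| = |z e - z' e| := by
      rw [show - z e - - z' e = -(z e - z' e) by ring, abs_neg]
    rw [he] at this
    exact this
  unfold phat
  have e1 := abs_le.1 bound1
  have e2 := abs_le.1 bound2
  rw [abs_le]
  constructor <;> [linarith [e1.1, e2.2]; linarith [e1.2, e2.1]]

include hb in
lemma phat_continuous : Continuous (phat b) := by
  rw [Metric.continuous_iff]
  intro z ε hε
  set k := (Fintype.card (V × V) : ℝ) with hk
  have hk0 : 0 ≤ k := by rw [hk]; positivity
  refine ⟨ε / (2 * k + 1), by positivity, fun z' hz' => ?_⟩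
  have hsum : ∑ e : V × V, |z' e - z e| ≤ k * dist z' z := by
    have hper : ∀ e : V × V, |z' e - z e| ≤ dist z' z := by
      intro e
      rw [← Real.dist_eq]
      exact dist_le_pi_dist z' z e
    calc ∑ e : V × V, |z' e - z e| ≤ ∑ _e : V × V, dist z' z :=
          Finset.sum_le_sum fun e _ => hper e
      _ = k * dist z' z := by
          rw [Finset.sum_const, Finset.card_univ, nsmul_eq_mul, hk]
  have hb2 := phat_lipbound hb z' z
  rw [Real.dist_eq]
  have hd : (0:ℝ) ≤ dist z' z := dist_nonneg
  have hfin : 2 * (k * dist z' z) < ε := by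
    have h1 : 2 * k * dist z' z ≤ 2 * k * (ε / (2 * k + 1)) :=
      mul_le_mul_of_nonneg_left (le_of_lt hz') (by linarith)
    have h2 : 2 * k * (ε / (2 * k + 1)) < ε := by
      have e0 : 2 * k * (ε / (2 * k + 1)) = 2 * k * ε / (2 * k + 1) := by ring
      rw [e0, div_lt_iff₀ (by linarith)]
      nlinarith
    linarith
  calc |phat b z' - phat b z| ≤ 2 * ∑ e : V × V, |z' e - z e| := hb2
    _ ≤ 2 * (k * dist z' z) := by linarith
    _ < ε := hfin

include hb in
/-- **Dual extraction via Hahn–Banach**: a feasible dual with value at most the primal value. -/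
lemma dual_exists (cv : V × V → ℝ) (hcv : ∀ e, 0 ≤ cv e) :
    ∃ Y : V × V → ℝ, (∀ e, 0 ≤ Y e) ∧
      (∀ q : {q // Adm b q}, 1 ≤ ∑ e : V × V, Y e * uf b q e) ∧
      ∑ e : V × V, Y e * cv e ≤ phi b cv := by
  classical
  set S : Set ((V × V → ℝ) × ℝ) := {p | p.2 < phat b p.1} with hS
  have hSconv : Convex ℝ S := by
    rintro ⟨z1, r1⟩ h1 ⟨z2, r2⟩ h2 a bb ha hbb hab
    simp only [hS, Set.mem_setOf_eq] at h1 h2 ⊢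
    have hcc := phat_concave hb (z1 := z1) (z2 := z2) ha hbb hab
    have e1 : (a • (z1, r1) + bb • (z2, r2)).2 = a * r1 + bb * r2 := rfl
    have e2 : (a • (z1, r1) + bb • (z2, r2)).1 = fun e => a * z1 e + bb * z2 e := by
      funext e; rfl
    rw [e1, e2]
    rcases eq_or_lt_of_le ha with rfl | hapos
    · have hbb1 : bb = 1 := by linarith
      subst hbb1
      simp only [zero_mul, zero_add, one_mul] at *
      refine lt_of_lt_of_le h2 ?_
      refine le_trans ?_ hcc
      linarith
    · have k1 := mul_lt_mul_of_pos_left h1 hapos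
      have k2 := mul_le_mul_of_nonneg_left (le_of_lt h2) hbb
      calc a * r1 + bb * r2 < a * phat b z1 + bb * phat b z2 := by linarith
        _ ≤ _ := hcc
  have hSopen : IsOpen S := by
    have : S = {p : (V × V → ℝ) × ℝ | p.2 - phat b p.1 < 0} := by
      ext p; simp [hS, sub_neg]
    rw [this]
    have hcont : Continuous fun p : (V × V → ℝ) × ℝ => p.2 - phat b p.1 :=
      continuous_snd.sub ((phat_continuous hb).comp continuous_fst)
    exact isOpen_lt hcont continuous_const
  have hnotin : ((cv, phat b cv) : (V × V → ℝ) × ℝ) ∉ S := by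
    simp [hS]
  obtain ⟨f, hf⟩ := geometric_hahn_banach_open_point hSconv hSopen hnotin
  set μ : ℝ := f (0, 1) with hμ
  set g : (V × V → ℝ) → ℝ := fun z => f (z, 0) with hg
  have hsplit : ∀ (z : V × V → ℝ) (r : ℝ), f (z, r) = g z + r * μ := by
    intro z r
    have : (z, r) = (z, 0) + r • ((0 : V × V → ℝ), (1:ℝ)) := by
      apply Prod.ext
      · simp
      · simp
    rw [this, map_add, map_smul]
    rw [hg, hμ]
    ring_nf
  have key : ∀ (z : V × V → ℝ) (r : ℝ), r < phat b z →
      g z + r * μ < g cv + phat b cv * μ := by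
    intro z r hr
    have := hf (z, r) hr
    rw [hsplit, hsplit] at this
    exact this
  have hμpos : 0 < μ := by
    have := key cv (phat b cv - 1) (by linarith)
    nlinarith
  -- basis coefficients
  set γ : V × V → ℝ := fun e => g (fun j => if e = j then (1:ℝ) else 0) with hγ
  have glin : ∀ z : V × V → ℝ, g z = ∑ e : V × V, z e * γ e := by
    intro z
    have hrep := pi_eq_sum_univ z
    calc g z = g (∑ e : V × V, z e • fun j => if e = j then (1:ℝ) else 0) := by rw [← hrep]
      _ = ∑ e : V × V, z e * γ e := by
          rw [hg]
          dsimp only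
          have : ((∑ e : V × V, z e • fun j => if e = j then (1:ℝ) else 0 : V × V → ℝ), (0:ℝ))
              = ∑ e : V × V, z e • ((fun j => if e = j then (1:ℝ) else 0 : V × V → ℝ), (0:ℝ)) := by
            apply Prod.ext
            · rw [Prod.fst_sum]
              simp
            · rw [Prod.snd_sum]
              simp
          rw [this, map_sum]
          refine Finset.sum_congr rfl fun e _ => ?_
          rw [map_smul]
          rw [hγ]
          simp [hg]
  set Y : V × V → ℝ := fun e => - γ e / μ with hY
  have supergrad : ∀ z : V × V → ℝ, phat b z ≤ phat b cv + ∑ e : V × V, Y e * (z e - cv e) := by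
    intro z
    have hstep : ∀ ε : ℝ, 0 < ε → phat b z - ε ≤ phat b cv + (g cv - g z) / μ := by
      intro ε hε
      have := key z (phat b z - ε) (by linarith)
      have h2 : (phat b z - ε) * μ ≤ phat b cv * μ + (g cv - g z) := by linarith
      have h3 : phat b z - ε ≤ (phat b cv * μ + (g cv - g z)) / μ := (le_div_iff₀ hμpos).2 h2
      have heq : (phat b cv * μ + (g cv - g z)) / μ = phat b cv + (g cv - g z) / μ := by
        field_simp
      linarith
    have hlim : phat b z ≤ phat b cv + (g cv - g z) / μ := by
      by_contra hcon
      push_neg at hcon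
      have := hstep ((phat b z - (phat b cv + (g cv - g z) / μ)) / 2) (by linarith)
      linarith
    have heq2 : (g cv - g z) / μ = ∑ e : V × V, Y e * (z e - cv e) := by
      rw [glin, glin, hY]
      rw [← Finset.sum_sub_distrib, Finset.sum_div]
      refine Finset.sum_congr rfl fun e _ => ?_
      field_simp
      ring
    rw [heq2] at hlim
    exact hlim
  refine ⟨Y, ?_, ?_, ?_⟩
  · -- nonnegativity from monotonicity
    intro e0
    have hz2 : ∀ e, 0 ≤ cv e + (if e0 = e then (1:ℝ) else 0) := by
      intro e; have := hcv e; split <;> linarith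
    have hmono : phat b cv ≤ phat b (fun e => cv e + (if e0 = e then 1 else 0)) := by
      rw [phat_eq hcv, phat_eq hz2]
      apply phi_mono hb hcv
      intro e; have := hcv e; split <;> linarith
    have hsg := supergrad (fun e => cv e + (if e0 = e then 1 else 0))
    have hsum : (∑ e : V × V, Y e * ((cv e + (if e0 = e then (1:ℝ) else 0)) - cv e)) = Y e0 := by
      rw [Finset.sum_eq_single e0]
      · simp
      · intro e _ he
        rw [if_neg (fun h : e0 = e => he h.symm)]
        ring
      · intro h; exact absurd (Finset.mem_univ e0) h
    rw [hsum] at hsg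
    linarith
  · -- dual feasibility
    intro q
    have hz2 : ∀ e, 0 ≤ cv e + uf b q e := fun e => add_nonneg (hcv e) (uf_nonneg b q e)
    have hshift : phi b cv + 1 ≤ phi b (fun e => cv e + uf b q e) := phi_shift hb hcv q
    have hsg := supergrad (fun e => cv e + uf b q e)
    rw [phat_eq hz2, phat_eq hcv] at hsg
    have hsum : ∑ e : V × V, Y e * ((cv e + uf b q e) - cv e) = ∑ e : V × V, Y e * uf b q e :=
      Finset.sum_congr rfl fun e _ => by ring
    rw [hsum] at hsg
    linarith
  · -- value bound
    have h00 : ∀ e : V × V, (0:ℝ) ≤ (fun _ => (0:ℝ)) e := fun e => le_refl 0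
    have hsg := supergrad (fun _ => 0)
    have h0 : phat b (fun _ => (0:ℝ)) = 0 := by
      rw [phat_eq h00]
      exact phi_zero hb
    rw [h0, phat_eq hcv] at hsg
    have hsum : ∑ e : V × V, Y e * ((0:ℝ) - cv e) = - ∑ e : V × V, Y e * cv e := by
      rw [← Finset.sum_neg_distrib]
      exact Finset.sum_congr rfl fun e _ => by ring
    rw [hsum] at hsg
    linarith

end Hat

section Assemble

variable {n : ℕ} {b : Fin n → V}

/-- symmetrized edge lengths from a dual vector. -/
noncomputable def lenY (Y : V × V → ℝ) : V → V → ℝ :=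
  fun x y => if x = y then 0 else Y (x, y) + Y (y, x)

lemma lenY_nonneg {Y : V × V → ℝ} (hY : ∀ e, 0 ≤ Y e) (x y : V) : 0 ≤ lenY Y x y := by
  unfold lenY; split
  · exact le_refl _
  · exact add_nonneg (hY _) (hY _)

lemma lenY_symm (Y : V × V → ℝ) (x y : V) : lenY Y x y = lenY Y y x := by
  unfold lenY
  rcases eq_or_ne x y with rfl | h
  · simp
  · rw [if_neg h, if_neg (Ne.symm h), add_comm]

lemma lenY_diag (Y : V × V → ℝ) (x : V) : lenY Y x x = 0 := by simp [lenY]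

/-- pairing a dual vector against the usage of a walk computes its length. -/
lemma pairing (Y : V × V → ℝ) (g : ℕ → V) (m : ℕ) :
    ∑ e : V × V, Y e * usg g m e.1 e.2 = len (lenY Y) g m := by
  have usg_sum : ∀ x y : V, usg g m x y = ∑ r ∈ range m,
      (if x = y then 0 else ((if g r = x ∧ g (r+1) = y then (1:ℝ) else 0)
        + (if g r = y ∧ g (r+1) = x then 1 else 0))) := by
    intro x y
    unfold usg stepCnt
    split
    · rw [Finset.sum_const, smul_zero]
    · rw [Finset.sum_add_distrib]
  calc ∑ e : V × V, Y e * usg g m e.1 e.2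
      = ∑ e : V × V, ∑ r ∈ range m, Y e *
        (if e.1 = e.2 then 0 else ((if g r = e.1 ∧ g (r+1) = e.2 then (1:ℝ) else 0)
          + (if g r = e.2 ∧ g (r+1) = e.1 then 1 else 0))) := by
        refine Finset.sum_congr rfl fun e _ => ?_
        rw [usg_sum e.1 e.2, Finset.mul_sum]
    _ = ∑ r ∈ range m, ∑ e : V × V, Y e *
        (if e.1 = e.2 then 0 else ((if g r = e.1 ∧ g (r+1) = e.2 then (1:ℝ) else 0)
          + (if g r = e.2 ∧ g (r+1) = e.1 then 1 else 0))) := Finset.sum_comm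
    _ = len (lenY Y) g m := by
        refine Finset.sum_congr rfl fun r _ => ?_
        set a := g r with ha
        set bq := g (r+1) with hbq
        rcases eq_or_ne a bq with hab | hab
        · rw [show (lenY Y) (g r) (g (r+1)) = 0 by rw [← ha, ← hbq, ← hab]; simp [lenY]]
          apply Finset.sum_eq_zero
          intro e _
          rcases eq_or_ne e.1 e.2 with h | h
          · rw [if_pos h, mul_zero]
          · rw [if_neg h, if_neg, if_neg]
            · ring
            · rintro ⟨h1, h2⟩
              apply h
              first
                | exact h1.symm.trans (hab.trans h2)
                | exact h2.symm.trans (hab.symm.trans h1)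
            · rintro ⟨h1, h2⟩
              apply h
              first
                | exact h1.symm.trans (hab.trans h2)
                | exact h2.symm.trans (hab.symm.trans h1)
        · have goal2 : ∑ x : V, ∑ y : V, Y (x, y) *
              (if x = y then 0 else ((if a = x ∧ bq = y then (1:ℝ) else 0)
                + (if a = y ∧ bq = x then 1 else 0)))
              = Y (a, bq) + Y (bq, a) := by
            have inner : ∀ x : V, (∑ y : V, Y (x, y) *
                (if x = y then 0 else ((if a = x ∧ bq = y then (1:ℝ) else 0)
                  + (if a = y ∧ bq = x then 1 else 0))))
                = (if x = a then Y (a, bq) else 0) + (if x = bq then Y (bq, a) else 0) := by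
              intro x
              rcases eq_or_ne x a with rfl | hxa
              · rw [if_pos rfl, if_neg hab]
                rw [Finset.sum_eq_single bq]
                · rw [if_neg hab, if_pos ⟨rfl, rfl⟩, if_neg (fun h => hab h.1)]
                  ring
                · intro y _ hy
                  rcases eq_or_ne a y with h | h
                  · rw [if_pos h]; ring
                  · rw [if_neg h, if_neg (fun hc => hy hc.2.symm), if_neg (fun hc => h hc.1)]
                    ring
                · intro h; exact absurd (Finset.mem_univ bq) h
              · rcases eq_or_ne x bq with rfl | hxb
                · rw [if_neg hxa, if_pos rfl]
                  rw [Finset.sum_eq_single a]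
                  · rw [if_neg (fun h => hab h.symm), if_neg (fun hc => hab hc.1),
                      if_pos ⟨rfl, rfl⟩]
                    ring
                  · intro y _ hy
                    rcases eq_or_ne bq y with h | h
                    · rw [if_pos h]; ring
                    · rw [if_neg h, if_neg (fun hc => hab hc.1), if_neg (fun hc => hy hc.1.symm)]
                      ring
                  · intro h; exact absurd (Finset.mem_univ a) h
                · rw [if_neg hxa, if_neg hxb, add_zero]
                  apply Finset.sum_eq_zero
                  intro y _
                  rcases eq_or_ne x y with h | h
                  · rw [if_pos h]; ring
                  · rw [if_neg h, if_neg (fun hc => hxa hc.1.symm), if_neg (fun hc => hxb hc.2.symm)]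
                    ring
            rw [Finset.sum_congr rfl (fun x _ => inner x), Finset.sum_add_distrib]
            rw [Finset.sum_ite_eq' Finset.univ a (fun _ => Y (a, bq)),
              Finset.sum_ite_eq' Finset.univ bq (fun _ => Y (bq, a))]
            simp
          rw [show (lenY Y) (g r) (g (r+1)) = Y (a, bq) + Y (bq, a) by
            rw [← ha, ← hbq, lenY, if_neg hab]]
          rw [Fintype.sum_prod_type]
          exact goal2

/-- the multiflow induced by a weighted family of walks. -/
noncomputable def mflow (b : Fin n → V) (w : {q // Adm b q} → ℝ) (i j : Fin n) :
    V → V → ℝ := fun x y =>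
  (∑ q ∈ Finset.univ.filter (fun q : {q // Adm b q} => q.val.1 = (i, j)),
      w q * flo (wk b q) (Fintype.card V) x y)
  - ∑ q ∈ Finset.univ.filter (fun q : {q // Adm b q} => q.val.1 = (j, i)),
      w q * flo (wk b q) (Fintype.card V) x y

lemma mflow_skew (w : {q // Adm b q} → ℝ) (i j : Fin n) (x y : V) :
    mflow b w j i x y = - mflow b w i j x y := by
  unfold mflow
  rw [neg_sub]

lemma mflow_antisym (w : {q // Adm b q} → ℝ) (i j : Fin n) (x y : V) :
    mflow b w i j x y = - mflow b w i j y x := by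
  unfold mflow
  have h : ∀ s : Finset {q // Adm b q},
      ∑ q ∈ s, w q * flo (wk b q) (Fintype.card V) x y
        = - ∑ q ∈ s, w q * flo (wk b q) (Fintype.card V) y x := by
    intro s
    rw [← Finset.sum_neg_distrib]
    refine Finset.sum_congr rfl fun q _ => ?_
    rw [flo_antisymm]
    ring
  rw [h, h]
  ring

lemma mflow_conserve (hb : Function.Injective b) (w : {q // Adm b q} → ℝ) (i j : Fin n)
    (x : V) (hxi : x ≠ b i) (hxj : x ≠ b j) :
    ∑ y, mflow b w i j x y = 0 := by
  unfold mflow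
  rw [Finset.sum_sub_distrib]
  have key : ∀ (i' j' : Fin n), x ≠ b i' → x ≠ b j' →
      ∑ y, ∑ q ∈ Finset.univ.filter (fun q : {q // Adm b q} => q.val.1 = (i', j')),
        w q * flo (wk b q) (Fintype.card V) x y = 0 := by
    intro i' j' hxi' hxj'
    rw [Finset.sum_comm]
    apply Finset.sum_eq_zero
    intro q hq
    have hq' := (Finset.mem_filter.1 hq).2
    rw [← Finset.mul_sum, sum_flo]
    have h0 : wk b q 0 = b i' := by rw [wk_zero, hq']
    have h1 : wk b q (Fintype.card V) = b j' := by rw [wk_last, hq']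
    rw [h0, h1, if_neg (fun h => hxi' h.symm), if_neg (fun h => hxj' h.symm)]
    ring
  rw [key i j hxi hxj, key j i hxj hxi]
  ring

lemma mflow_capacity {c : V → V → ℝ} (w : {q // Adm b q} → ℝ)
    (hw : w ∈ FEAS b (fun e => c e.1 e.2)) (x y : V) :
    ∑ p ∈ Finset.univ.filter (fun p : Fin n × Fin n => p.1 < p.2),
      |mflow b w p.1 p.2 x y| ≤ c x y := by
  classical
  set K := Fintype.card V
  have per_p : ∀ p : Fin n × Fin n, |mflow b w p.1 p.2 x y|
      ≤ ∑ q ∈ Finset.univ.filter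
          (fun q : {q // Adm b q} => q.val.1 = p ∨ q.val.1 = p.swap),
        w q * usg (wk b q) K x y := by
    intro p
    unfold mflow
    have split : Finset.univ.filter
        (fun q : {q // Adm b q} => q.val.1 = p ∨ q.val.1 = p.swap)
        = (Finset.univ.filter (fun q : {q // Adm b q} => q.val.1 = (p.1, p.2)))
          ∪ (Finset.univ.filter (fun q : {q // Adm b q} => q.val.1 = (p.2, p.1))) := by
      rw [← Finset.filter_or]
      rfl
    have bnd : ∀ s : Finset {q // Adm b q},
        |∑ q ∈ s, w q * flo (wk b q) K x y| ≤ ∑ q ∈ s, w q * usg (wk b q) K x y := by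
      intro s
      refine le_trans (Finset.abs_sum_le_sum_abs _ _) (Finset.sum_le_sum fun q _ => ?_)
      rw [abs_mul, abs_of_nonneg (hw.1 q)]
      exact mul_le_mul_of_nonneg_left (abs_flo_le_usg _ _ _ _) (hw.1 q)
    rcases eq_or_ne p.1 p.2 with hp | hp
    · -- diagonal label: the two sums are identical
      have : mflow b w p.1 p.2 x y = 0 := by
        unfold mflow
        rw [show (p.2, p.1) = (p.1, p.2) by rw [hp]]
        ring
      unfold mflow at this
      rw [this]
      simp only [abs_zero]
      apply Finset.sum_nonneg
      intro q _
      exact mul_nonneg (hw.1 q) (usg_nonneg _ _ _ _)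
    · have hdisj : Disjoint
          (Finset.univ.filter (fun q : {q // Adm b q} => q.val.1 = (p.1, p.2)))
          (Finset.univ.filter (fun q : {q // Adm b q} => q.val.1 = (p.2, p.1))) := by
        apply Finset.disjoint_filter_filter'
        rw [disjoint_iff_inf_le]
        intro q hq
        exfalso
        have h1 := hq.1
        have h2 := hq.2
        beta_reduce at h1 h2
        rw [h1] at h2
        exact hp (by rw [Prod.ext_iff] at h2; exact h2.1)
      rw [split, Finset.sum_union hdisj]
      have t1 := bnd (Finset.univ.filter (fun q : {q // Adm b q} => q.val.1 = (p.1, p.2)))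
      have t2 := bnd (Finset.univ.filter (fun q : {q // Adm b q} => q.val.1 = (p.2, p.1)))
      have habs := abs_sub
        (∑ q ∈ Finset.univ.filter (fun q : {q // Adm b q} => q.val.1 = (p.1, p.2)),
          w q * flo (wk b q) K x y)
        (∑ q ∈ Finset.univ.filter (fun q : {q // Adm b q} => q.val.1 = (p.2, p.1)),
          w q * flo (wk b q) K x y)
      have hpp : (p.1, p.2) = p := rfl
      rw [hpp] at t1 habs ⊢
      linarith
  have hdisjfam : ∀ p ∈ Finset.univ.filter (fun p : Fin n × Fin n => p.1 < p.2),
      ∀ p' ∈ Finset.univ.filter (fun p : Fin n × Fin n => p.1 < p.2), p ≠ p' →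
      Disjoint
        (Finset.univ.filter (fun q : {q // Adm b q} => q.val.1 = p ∨ q.val.1 = p.swap))
        (Finset.univ.filter (fun q : {q // Adm b q} => q.val.1 = p' ∨ q.val.1 = p'.swap)) := by
    intro p hp p' hp' hne
    have hplt := (Finset.mem_filter.1 hp).2
    have hplt' := (Finset.mem_filter.1 hp').2
    rw [Finset.disjoint_left]
    intro q hq hq'
    have h1 := (Finset.mem_filter.1 hq).2
    have h2 := (Finset.mem_filter.1 hq').2
    rcases h1 with h1 | h1 <;> rcases h2 with h2 | h2
    · exact hne (h1 ▸ h2 ▸ rfl)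
    · rw [h1] at h2
      rw [h2] at hplt
      rw [Prod.ext_iff] at h2
      simp only [Prod.fst_swap, Prod.snd_swap] at *
      omega
    · rw [h1] at h2
      rw [Prod.ext_iff] at h2
      simp only [Prod.fst_swap, Prod.snd_swap] at h2
      rw [← h2.1, ← h2.2] at hplt'
      omega
    · rw [h1] at h2
      have : p = p' := by
        rw [Prod.ext_iff] at h2 ⊢
        simp only [Prod.fst_swap, Prod.snd_swap] at h2
        exact ⟨h2.2, h2.1⟩
      exact hne this
  calc ∑ p ∈ Finset.univ.filter (fun p : Fin n × Fin n => p.1 < p.2),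
        |mflow b w p.1 p.2 x y|
      ≤ ∑ p ∈ Finset.univ.filter (fun p : Fin n × Fin n => p.1 < p.2),
        ∑ q ∈ Finset.univ.filter
          (fun q : {q // Adm b q} => q.val.1 = p ∨ q.val.1 = p.swap),
          w q * usg (wk b q) K x y := Finset.sum_le_sum fun p _ => per_p p
    _ = ∑ q ∈ (Finset.univ.filter (fun p : Fin n × Fin n => p.1 < p.2)).biUnion
          (fun p => Finset.univ.filter
            (fun q : {q // Adm b q} => q.val.1 = p ∨ q.val.1 = p.swap)),
          w q * usg (wk b q) K x y := (Finset.sum_biUnion hdisjfam).symm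
    _ ≤ ∑ q, w q * usg (wk b q) K x y := by
        apply Finset.sum_le_sum_of_subset_of_nonneg (Finset.subset_univ _)
        intro q _ _
        exact mul_nonneg (hw.1 q) (usg_nonneg _ _ _ _)
    _ ≤ c x y := hw.2 (x, y)

lemma mflow_flux (hb : Function.Injective b) (w : {q // Adm b q} → ℝ) (i : Fin n) :
    ∑ j ∈ Finset.univ.filter (fun j => j ≠ i), ∑ y, mflow b w i j (b i) y
      = ∑ q ∈ Finset.univ.filter
          (fun q : {q // Adm b q} => q.val.1.1 = i ∨ q.val.1.2 = i), w q := by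
  classical
  set K := Fintype.card V
  have perj : ∀ j, j ≠ i → ∑ y, mflow b w i j (b i) y
      = ∑ q ∈ Finset.univ.filter
          (fun q : {q // Adm b q} => q.val.1 = (i, j) ∨ q.val.1 = (j, i)), w q := by
    intro j hj
    have hbne : b j ≠ b i := fun h => hj (hb h)
    have sA : ∑ y, ∑ q ∈ Finset.univ.filter (fun q : {q // Adm b q} => q.val.1 = (i, j)),
        w q * flo (wk b q) K (b i) y
        = ∑ q ∈ Finset.univ.filter (fun q : {q // Adm b q} => q.val.1 = (i, j)), w q := by
      rw [Finset.sum_comm]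
      refine Finset.sum_congr rfl fun q hq => ?_
      have hq' := (Finset.mem_filter.1 hq).2
      rw [← Finset.mul_sum, sum_flo]
      rw [show wk b q 0 = b i by rw [wk_zero, hq'],
        show wk b q K = b j by rw [wk_last, hq']]
      rw [if_pos rfl, if_neg hbne]
      ring
    have sB : ∑ y, ∑ q ∈ Finset.univ.filter (fun q : {q // Adm b q} => q.val.1 = (j, i)),
        w q * flo (wk b q) K (b i) y
        = - ∑ q ∈ Finset.univ.filter (fun q : {q // Adm b q} => q.val.1 = (j, i)), w q := by
      rw [Finset.sum_comm, ← Finset.sum_neg_distrib]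
      refine Finset.sum_congr rfl fun q hq => ?_
      have hq' := (Finset.mem_filter.1 hq).2
      rw [← Finset.mul_sum, sum_flo]
      rw [show wk b q 0 = b j by rw [wk_zero, hq'],
        show wk b q K = b i by rw [wk_last, hq']]
      rw [if_neg hbne, if_pos rfl]
      ring
    have hdisj : Disjoint
        (Finset.univ.filter (fun q : {q // Adm b q} => q.val.1 = (i, j)))
        (Finset.univ.filter (fun q : {q // Adm b q} => q.val.1 = (j, i))) := by
      rw [Finset.disjoint_left]
      intro q hq hq'
      have h1 := (Finset.mem_filter.1 hq).2
      have h2 := (Finset.mem_filter.1 hq').2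
      rw [h1, Prod.ext_iff] at h2
      exact hj h2.1.symm  -- i = j
    have hsplit : Finset.univ.filter
        (fun q : {q // Adm b q} => q.val.1 = (i, j) ∨ q.val.1 = (j, i))
        = (Finset.univ.filter (fun q : {q // Adm b q} => q.val.1 = (i, j)))
          ∪ (Finset.univ.filter (fun q : {q // Adm b q} => q.val.1 = (j, i))) :=
      (Finset.filter_or _ _ _)
    unfold mflow
    rw [Finset.sum_sub_distrib, sA, sB, hsplit, Finset.sum_union hdisj]
    ring
  rw [Finset.sum_congr rfl (fun j hj => perj j (Finset.mem_filter.1 hj).2)]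
  rw [← Finset.sum_biUnion]
  · congr 1
    ext q
    simp only [Finset.mem_biUnion, Finset.mem_filter, Finset.mem_univ, true_and]
    constructor
    · rintro ⟨j, hj, h | h⟩
      · left; rw [h]
      · right; rw [h]
    · rintro (h | h)
      · refine ⟨q.val.1.2, ?_, Or.inl ?_⟩
        · intro hcon
          exact q.prop.1 (by rw [h, hcon])
        · rw [← h]
      · refine ⟨q.val.1.1, ?_, Or.inr ?_⟩
        · intro hcon
          exact q.prop.1 (by rw [h, hcon])
        · rw [← h]
  · intro j hj j' hj' hne
    have hjne := (Finset.mem_filter.1 (Finset.mem_coe.1 hj)).2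
    have hjne' := (Finset.mem_filter.1 (Finset.mem_coe.1 hj')).2
    simp only [Function.onFun]
    rw [Finset.disjoint_left]
    intro q hq hq'
    have h1 := (Finset.mem_filter.1 hq).2
    have h2 := (Finset.mem_filter.1 hq').2
    rcases h1 with h1 | h1 <;> rcases h2 with h2 | h2 <;>
      rw [h1, Prod.mk.injEq] at h2
    · exact hne h2.2
    · exact hjne h2.2
    · exact hjne h2.1
    · exact hne h2.1

lemma cross_swap (g : ℕ → V) (m : ℕ) (W : Finset V) :
    ∑ x ∈ Wᶜ, ∑ y ∈ W, usg g m x y = ∑ x ∈ W, ∑ y ∈ Wᶜ, usg g m x y := by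
  rw [Finset.sum_comm]
  exact Finset.sum_congr rfl fun x _ => Finset.sum_congr rfl fun y _ => usg_symm g m y x

lemma mflow_cutbound {c : V → V → ℝ} (hb : Function.Injective b)
    (w : {q // Adm b q} → ℝ) (hw : w ∈ FEAS b (fun e => c e.1 e.2)) (i : Fin n)
    (W : Finset V) (hW : ∀ k, b k ∈ W ↔ k = i) :
    ∑ q ∈ Finset.univ.filter
        (fun q : {q // Adm b q} => q.val.1.1 = i ∨ q.val.1.2 = i), w q
      ≤ cutval c W := by
  classical
  set K := Fintype.card V
  set X : {q // Adm b q} → ℝ := fun q => ∑ x ∈ W, ∑ y ∈ Wᶜ, usg (wk b q) K x y with hX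
  have hX0 : ∀ q, 0 ≤ X q := fun q => Finset.sum_nonneg fun x _ =>
    Finset.sum_nonneg fun y _ => usg_nonneg _ _ _ _
  have hX1 : ∀ q ∈ Finset.univ.filter
      (fun q : {q // Adm b q} => q.val.1.1 = i ∨ q.val.1.2 = i), 1 ≤ X q := by
    intro q hq
    rcases (Finset.mem_filter.1 hq).2 with h | h
    · apply one_le_cross_usage
      · rw [wk_zero, h]
        exact (hW i).2 rfl
      · rw [wk_last]
        intro hcon
        exact q.prop.1 (by rw [h, (hW q.val.1.2).1 hcon])
    · have h0 : wk b q 0 ∈ Wᶜ := by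
        rw [Finset.mem_compl, wk_zero]
        intro hcon
        exact q.prop.1 (by rw [h, (hW q.val.1.1).1 hcon])
      have h1 : wk b q K ∉ Wᶜ := by
        rw [Finset.mem_compl, not_not, wk_last, h]
        exact (hW i).2 rfl
      have hcr := one_le_cross_usage (wk b q) K Wᶜ h0 h1
      rw [compl_compl] at hcr
      show (1:ℝ) ≤ ∑ x ∈ W, ∑ y ∈ Wᶜ, usg (wk b q) K x y
      rw [← cross_swap]
      exact hcr
  have exch : ∑ q, w q * X q = ∑ x ∈ W, ∑ y ∈ Wᶜ, ∑ q, w q * usg (wk b q) K x y := by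
    have per : ∀ q, w q * X q = ∑ x ∈ W, ∑ y ∈ Wᶜ, w q * usg (wk b q) K x y := by
      intro q
      rw [hX]
      dsimp only
      rw [Finset.mul_sum]
      exact Finset.sum_congr rfl fun x _ => Finset.mul_sum _ _ _
    rw [Finset.sum_congr rfl fun q _ => per q, Finset.sum_comm]
    exact Finset.sum_congr rfl fun x _ => Finset.sum_comm
  calc ∑ q ∈ Finset.univ.filter
        (fun q : {q // Adm b q} => q.val.1.1 = i ∨ q.val.1.2 = i), w q
      ≤ ∑ q ∈ Finset.univ.filter
          (fun q : {q // Adm b q} => q.val.1.1 = i ∨ q.val.1.2 = i), w q * X q := by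
        refine Finset.sum_le_sum fun q hq => ?_
        nth_rewrite 1 [← mul_one (w q)]
        exact mul_le_mul_of_nonneg_left (hX1 q hq) (hw.1 q)
    _ ≤ ∑ q, w q * X q := by
        apply Finset.sum_le_sum_of_subset_of_nonneg (Finset.subset_univ _)
        intro q _ _
        exact mul_nonneg (hw.1 q) (hX0 q)
    _ = ∑ x ∈ W, ∑ y ∈ Wᶜ, ∑ q, w q * usg (wk b q) K x y := exch
    _ ≤ ∑ x ∈ W, ∑ y ∈ Wᶜ, c x y := by
        refine Finset.sum_le_sum fun x _ => Finset.sum_le_sum fun y _ => ?_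
        exact hw.2 (x, y)
    _ = cutval c W := rfl

lemma sum_inc (w : {q // Adm b q} → ℝ) :
    ∑ i, (∑ q ∈ Finset.univ.filter
        (fun q : {q // Adm b q} => q.val.1.1 = i ∨ q.val.1.2 = i), w q)
      = 2 * ∑ q, w q := by
  classical
  have per : ∀ i : Fin n, ∑ q ∈ Finset.univ.filter
      (fun q : {q // Adm b q} => q.val.1.1 = i ∨ q.val.1.2 = i), w q
      = ∑ q : {q // Adm b q}, (if q.val.1.1 = i ∨ q.val.1.2 = i then w q else 0) :=
    fun i => Finset.sum_filter _ _
  rw [Finset.sum_congr rfl fun i _ => per i, Finset.sum_comm]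
  have perq : ∀ q : {q // Adm b q},
      ∑ i, (if q.val.1.1 = i ∨ q.val.1.2 = i then w q else 0) = 2 * w q := by
    intro q
    have hsplit : ∀ i, (if q.val.1.1 = i ∨ q.val.1.2 = i then w q else 0)
        = (if q.val.1.1 = i then w q else 0) + (if q.val.1.2 = i then w q else 0) := by
      intro i
      by_cases h1 : q.val.1.1 = i <;> by_cases h2 : q.val.1.2 = i
      · exact absurd (h1.trans h2.symm) q.prop.1
      · simp [h1, h2]
      · simp [h1, h2]
      · simp [h1, h2]
    rw [Finset.sum_congr rfl fun i _ => hsplit i, Finset.sum_add_distrib]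
    rw [Finset.sum_ite_eq Finset.univ q.val.1.1 (fun _ => w q),
      Finset.sum_ite_eq Finset.univ q.val.1.2 (fun _ => w q)]
    simp
    ring
  rw [Finset.sum_congr rfl fun q _ => perq q, ← Finset.mul_sum]

end Assemble
end MaxMF

open Finset

/-- **Existence of a max multiflow** on a finite network: there is a multiflow
(a family of antisymmetric flows `f i j`, extended skew-symmetrically in the
indices, conserved away from its two boundary vertices, and jointly obeying the
capacity bound) whose flux out of each boundary vertex `b i` equals the
single-party min-cut value `S({i})`. -/
theorem max_multiflow_exists {V : Type*} [Fintype V] [DecidableEq V] {n : ℕ}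
    (c : V → V → ℝ) (hsym : ∀ x y, c x y = c y x) (hnn : ∀ x y, 0 ≤ c x y)
    (b : Fin n → V) (hb : Function.Injective b) :
    ∃ f : Fin n → Fin n → V → V → ℝ,
      -- extension to all index pairs: `f j i = - f i j`
      (∀ i j x y, f j i x y = - f i j x y) ∧
      -- each `f i j` is antisymmetric as a flow
      (∀ i j x y, f i j x y = - f i j y x) ∧
      -- flow conservation away from the boundary vertices `b i`, `b j`
      (∀ i j x, x ≠ b i → x ≠ b j → ∑ y, f i j x y = 0) ∧
      -- capacity constraint: `∑_{i<j} |f i j x y| ≤ c x y`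
      (∀ x y, ∑ p ∈ univ.filter (fun p : Fin n × Fin n => p.1 < p.2),
          |f p.1 p.2 x y| ≤ c x y) ∧
      -- the flux out of `b i` equals the single-party min-cut value `S({i})`
      (∀ i : Fin n,
        IsLeast
          { r : ℝ | ∃ W : Finset V, (∀ k : Fin n, b k ∈ W ↔ k = i) ∧
              r = ∑ x ∈ W, ∑ y ∈ Wᶜ, c x y }
          (∑ j ∈ univ.filter (fun j => j ≠ i), ∑ y, f i j (b i) y)) := by
  classical
  have hcv0 : ∀ e : V × V, 0 ≤ (fun e : V × V => c e.1 e.2) e := fun e => hnn _ _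
  -- min cut values
  have hcandne : ∀ i : Fin n,
      ((Finset.univ.filter (fun W : Finset V => ∀ k, b k ∈ W ↔ k = i)).image
        (MaxMF.cutval c)).Nonempty := by
    intro i
    refine ⟨MaxMF.cutval c (insert (b i) ((Finset.univ.image b)ᶜ)),
      Finset.mem_image_of_mem _ ?_⟩
    rw [Finset.mem_filter]
    refine ⟨Finset.mem_univ _, fun k => ?_⟩
    constructor
    · intro hk
      rcases Finset.mem_insert.1 hk with h | h
      · exact hb h
      · exact absurd (Finset.mem_image_of_mem b (Finset.mem_univ k)) (Finset.mem_compl.1 h)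
    · rintro rfl
      exact Finset.mem_insert_self _ _
  set S : Fin n → ℝ := fun i =>
    ((Finset.univ.filter (fun W : Finset V => ∀ k, b k ∈ W ↔ k = i)).image
      (MaxMF.cutval c)).min' (hcandne i) with hSdef
  have hSle : ∀ i (W : Finset V), (∀ k, b k ∈ W ↔ k = i) → S i ≤ MaxMF.cutval c W := by
    intro i W hW
    apply Finset.min'_le
    exact Finset.mem_image_of_mem _ (Finset.mem_filter.2 ⟨Finset.mem_univ _, hW⟩)
  have hSmem : ∀ i, ∃ W : Finset V, (∀ k, b k ∈ W ↔ k = i) ∧ MaxMF.cutval c W = S i := by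
    intro i
    have hmm := Finset.min'_mem _ (hcandne i)
    rw [Finset.mem_image] at hmm
    obtain ⟨W, hWmem, hWeq⟩ := hmm
    exact ⟨W, (Finset.mem_filter.1 hWmem).2, hWeq⟩
  have hS0 : ∀ i, 0 ≤ S i := by
    intro i
    obtain ⟨W, -, hWeq⟩ := hSmem i
    rw [← hWeq]
    exact Finset.sum_nonneg fun x _ => Finset.sum_nonneg fun y _ => hnn x y
  -- optimal primal solution
  have hsumcont : Continuous (fun w : {q // MaxMF.Adm b q} → ℝ => ∑ q, w q) :=
    continuous_finset_sum _ fun q _ => continuous_apply q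
  have hclosed : IsClosed (MaxMF.FEAS b (fun e : V × V => c e.1 e.2)) := by
    have hrw : MaxMF.FEAS b (fun e : V × V => c e.1 e.2)
        = (⋂ q : {q // MaxMF.Adm b q}, {w : {q // MaxMF.Adm b q} → ℝ | 0 ≤ w q})
          ∩ ⋂ e : V × V, {w : {q // MaxMF.Adm b q} → ℝ |
              ∑ q, w q * MaxMF.uf b q e ≤ c e.1 e.2} := by
      ext w
      simp only [MaxMF.FEAS, Set.mem_setOf_eq, Set.mem_inter_iff, Set.mem_iInter]
    rw [hrw]
    apply IsClosed.inter
    · exact isClosed_iInter fun q => isClosed_le continuous_const (continuous_apply q)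
    · refine isClosed_iInter fun e => isClosed_le ?_ continuous_const
      exact continuous_finset_sum _ fun q _ => (continuous_apply q).mul continuous_const
  have hsubset : MaxMF.FEAS b (fun e : V × V => c e.1 e.2)
      ⊆ Set.Icc (fun _ => (0:ℝ)) (fun _ => ∑ e : V × V, c e.1 e.2) := by
    intro w hw
    rw [Set.mem_Icc]
    constructor
    · intro q
      exact hw.1 q
    · intro q
      have h1 : w q ≤ ∑ q', w q' :=
        Finset.single_le_sum (f := fun q' => w q') (fun q' _ => hw.1 q') (Finset.mem_univ q)
      exact le_trans h1 (MaxMF.sum_le_of_mem hb hw)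
  have hcompact : IsCompact (MaxMF.FEAS b (fun e : V × V => c e.1 e.2)) :=
    IsCompact.of_isClosed_subset isCompact_Icc hclosed hsubset
  obtain ⟨w, hwmem, hwmax⟩ := hcompact.exists_isMaxOn
    ⟨_, MaxMF.FEAS_zero_mem b hcv0⟩ hsumcont.continuousOn
  have hphile : MaxMF.phi b (fun e : V × V => c e.1 e.2) ≤ ∑ q, w q :=
    MaxMF.phi_le ⟨_, MaxMF.FEAS_zero_mem b hcv0⟩ (fun w' hw' => hwmax hw')
  -- dual solution
  obtain ⟨Y, hY0, hYfeas, hYval⟩ := MaxMF.dual_exists hb (fun e : V × V => c e.1 e.2) hcv0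
  -- metric constraint
  have HC : ∀ (i j : Fin n) (g : ℕ → V), i ≠ j → g 0 = b i →
      g (Fintype.card V) = b j → 1 ≤ MaxMF.len (MaxMF.lenY Y) g (Fintype.card V) := by
    intro i j g hij hg0 hgM
    have hadm : MaxMF.Adm b ((i, j), fun r : Fin (Fintype.card V + 1) => g r.val) := by
      refine ⟨hij, ?_, ?_⟩
      · show g ((0 : Fin (Fintype.card V + 1))).val = b i
        rw [Fin.val_zero]
        exact hg0
      · show g ((Fin.last (Fintype.card V))).val = b j
        rw [Fin.val_last]
        exact hgM
    have h1 := hYfeas ⟨_, hadm⟩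
    have h2 : (1:ℝ) ≤ MaxMF.len (MaxMF.lenY Y) (MaxMF.wk b ⟨_, hadm⟩) (Fintype.card V) := by
      rw [← MaxMF.pairing]
      exact h1
    have h3 : MaxMF.len (MaxMF.lenY Y) (MaxMF.wk b ⟨_, hadm⟩) (Fintype.card V)
        = MaxMF.len (MaxMF.lenY Y) g (Fintype.card V) := by
      apply MaxMF.len_congr
      intro r hr
      have : MaxMF.wk b ⟨_, hadm⟩ r = g (min r (Fintype.card V)) := rfl
      rw [this, Nat.min_eq_left hr]
    rw [h3] at h2
    exact h2
  have hdual := MaxMF.dual_bound c hsym hnn (MaxMF.lenY_nonneg hY0) (MaxMF.lenY_symm Y)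
    (MaxMF.lenY_diag Y) hb HC S hS0 hSle
  -- chain the dual value to the primal optimum
  have hchain : ∑ x, ∑ y, c x y * MaxMF.lenY Y x y
      ≤ 2 * ∑ e : V × V, Y e * c e.1 e.2 := by
    have expand : ∀ x y : V, c x y * MaxMF.lenY Y x y
        = (if x = y then 0 else c x y * Y (x, y))
          + (if x = y then 0 else c x y * Y (y, x)) := by
      intro x y
      unfold MaxMF.lenY
      split
      · ring
      · ring
    rw [Finset.sum_congr rfl fun x _ => Finset.sum_congr rfl fun y _ => expand x y]
    have hsplit : ∑ x, ∑ y, ((if x = y then (0:ℝ) else c x y * Y (x, y))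
          + (if x = y then 0 else c x y * Y (y, x)))
        = (∑ x, ∑ y, (if x = y then (0:ℝ) else c x y * Y (x, y)))
          + ∑ x, ∑ y, (if x = y then (0:ℝ) else c x y * Y (y, x)) := by
      rw [← Finset.sum_add_distrib]
      exact Finset.sum_congr rfl fun x _ => Finset.sum_add_distrib
    rw [hsplit]
    have hswap : ∑ x, ∑ y, (if x = y then (0:ℝ) else c x y * Y (y, x))
        = ∑ x, ∑ y, (if x = y then (0:ℝ) else c x y * Y (x, y)) := by
      rw [Finset.sum_comm]
      refine Finset.sum_congr rfl fun x _ => Finset.sum_congr rfl fun y _ => ?_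
      rcases eq_or_ne x y with rfl | h
      · simp
      · rw [if_neg h, if_neg (Ne.symm h), hsym y x]
    rw [hswap]
    have hbound : ∑ x, ∑ y, (if x = y then (0:ℝ) else c x y * Y (x, y))
        ≤ ∑ e : V × V, Y e * c e.1 e.2 := by
      rw [Fintype.sum_prod_type]
      refine Finset.sum_le_sum fun x _ => Finset.sum_le_sum fun y _ => ?_
      rcases eq_or_ne x y with rfl | h
      · rw [if_pos rfl]
        exact mul_nonneg (hY0 (x, x)) (hnn x x)
      · rw [if_neg h]
        exact le_of_eq (mul_comm _ _)
    linarith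
  have hmain : ∑ i, S i ≤ 2 * ∑ q, w q := by
    have := hYval
    linarith
  -- assemble the multiflow
  refine ⟨MaxMF.mflow b w, fun i j x y => MaxMF.mflow_skew w i j x y,
    fun i j x y => MaxMF.mflow_antisym w i j x y,
    fun i j x hxi hxj => MaxMF.mflow_conserve hb w i j x hxi hxj,
    fun x y => MaxMF.mflow_capacity w hwmem x y, ?_⟩
  have hflux := MaxMF.mflow_flux hb w
  have hFle : ∀ i, (∑ q ∈ Finset.univ.filter
      (fun q : {q // MaxMF.Adm b q} => q.val.1.1 = i ∨ q.val.1.2 = i), w q) ≤ S i := by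
    intro i
    obtain ⟨W, hWv, hWe⟩ := hSmem i
    rw [← hWe]
    exact MaxMF.mflow_cutbound hb w hwmem i W hWv
  have hFsum : ∑ i, (∑ q ∈ Finset.univ.filter
      (fun q : {q // MaxMF.Adm b q} => q.val.1.1 = i ∨ q.val.1.2 = i), w q)
      = 2 * ∑ q, w q := MaxMF.sum_inc w
  have hFS : ∀ i, (∑ q ∈ Finset.univ.filter
      (fun q : {q // MaxMF.Adm b q} => q.val.1.1 = i ∨ q.val.1.2 = i), w q) = S i := by
    have hsums : (∑ i, (∑ q ∈ Finset.univ.filter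
        (fun q : {q // MaxMF.Adm b q} => q.val.1.1 = i ∨ q.val.1.2 = i), w q)) = ∑ i, S i := by
      apply le_antisymm
      · exact Finset.sum_le_sum fun i _ => hFle i
      · rw [hFsum]
        exact hmain
    have := (Finset.sum_eq_sum_iff_of_le (fun i _ => hFle i)).1 hsums
    intro i
    exact this i (Finset.mem_univ i)
  intro i
  constructor
  · obtain ⟨W, hWv, hWe⟩ := hSmem i
    refine ⟨W, hWv, ?_⟩
    rw [hflux i, hFS i, ← hWe]
    rfl
  · rintro r ⟨W, hWv, rfl⟩
    rw [hflux i, hFS i]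
    exact hSle i W hWv
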